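/- arXiv:2510.07235 — 5 statements merged into one kernel-verified Lean document; each statement's English description precedes it below -/
import Mathlib

section
/- Let F : [0,1] → ℝ be twice continuously differentiable with derivative f = F′. Then, uniformly for y ∈ [0,1] as m → ∞, the Bernstein polynomial satisfies 𝓑_m(F)(y) = F(y) + (y(1−y)/(2m)) f′(y) + o(m⁻¹); that is, sup_{y∈[0,1]} |𝓑_m(F)(y) − F(y) − (y(1−y)/(2m)) f′(y)| = o(m⁻¹). -/
open MeasureTheory ProbabilityTheory Filter Asymptotics

noncomputable section

/-- Bernstein basis polynomial `b_{m,k}(y) = C(m,k) y^k (1-y)^(m-k)`. -/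
def bern (m k : ℕ) (y : ℝ) : ℝ := (m.choose k : ℝ) * y ^ k * (1 - y) ^ (m - k)

/-- Bernstein smoothing (the Bernstein operator `𝓑_m`) applied to a function `G`. -/
def bsmooth (m : ℕ) (G : ℝ → ℝ) (y : ℝ) : ℝ :=
  ∑ k ∈ Finset.range (m + 1), G ((k : ℝ) / (m : ℝ)) * bern m k y

lemma bern_nonneg {m k : ℕ} {y : ℝ} (hy : y ∈ Set.Icc (0:ℝ) 1) : 0 ≤ bern m k y := by
  have h1 : (0:ℝ) ≤ y := hy.1
  have h2 : (0:ℝ) ≤ 1 - y := by linarith [hy.2]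
  unfold bern; positivity

lemma bern_sum (m : ℕ) (y : ℝ) : ∑ k ∈ Finset.range (m + 1), bern m k y = 1 := by
  have := add_pow y (1 - y) m
  simp only [add_sub_cancel, one_pow] at this
  rw [this]
  refine Finset.sum_congr rfl fun k _ => ?_
  unfold bern; ring

lemma momS : ∀ (j m : ℕ) (y : ℝ),
    ∑ k ∈ Finset.range (m + 1), (k.descFactorial j : ℝ) * bern m k y
      = (m.descFactorial j : ℝ) * y ^ j := by
  intro j
  induction j with
  | zero => intro m y; simp [bern_sum]
  | succ j ih =>
    intro m y
    cases m with
    | zero => simp [bern]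
    | succ n =>
      rw [Finset.sum_range_succ']
      have h0 : ((Nat.descFactorial 0 (j+1) : ℕ) : ℝ) * bern (n+1) 0 y = 0 := by
        simp [Nat.zero_descFactorial_succ]
      rw [h0, add_zero]
      have hterm : ∀ i ∈ Finset.range (n + 1),
          ((Nat.descFactorial (i+1) (j+1) : ℕ) : ℝ) * bern (n+1) (i+1) y
            = ((n:ℝ)+1) * y * ((Nat.descFactorial i j : ℕ) * bern n i y) := by
        intro i _
        have hc : ((n+1) * Nat.choose n i : ℝ) = (Nat.choose (n+1) (i+1) : ℝ) * (i+1) := by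
          exact_mod_cast congrArg (Nat.cast (R := ℝ)) (Nat.add_one_mul_choose_eq n i)
        unfold bern
        rw [Nat.succ_descFactorial_succ]
        push_cast
        linear_combination (-(i.descFactorial j : ℝ) * y ^ (i+1) * (1 - y) ^ (n - i)) * hc
      rw [Finset.sum_congr rfl hterm, ← Finset.mul_sum, ih n y,
        Nat.succ_descFactorial_succ]
      push_cast
      ring

lemma cd1 (k : ℕ) : ((k.descFactorial 1 : ℕ) : ℝ) = k := by simp

lemma cd2 (k : ℕ) : ((k.descFactorial 2 : ℕ) : ℝ) = k * (k - 1) := by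
  cases k with
  | zero => simp
  | succ n => rw [Nat.succ_descFactorial_succ, Nat.descFactorial_one]; push_cast; ring

lemma cd3 (k : ℕ) : ((k.descFactorial 3 : ℕ) : ℝ) = k * (k - 1) * (k - 2) := by
  cases k with
  | zero => simp
  | succ n => rw [Nat.succ_descFactorial_succ]; push_cast [cd2 n]; ring

lemma cd4 (k : ℕ) : ((k.descFactorial 4 : ℕ) : ℝ) = k * (k - 1) * (k - 2) * (k - 3) := by
  cases k with
  | zero => simp
  | succ n => rw [Nat.succ_descFactorial_succ]; push_cast [cd3 n]; ring

lemma mom1 (m : ℕ) (y : ℝ) :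
    ∑ k ∈ Finset.range (m + 1), ((k : ℝ) - m * y) * bern m k y = 0 := by
  have h : ∀ k ∈ Finset.range (m + 1), ((k : ℝ) - m * y) * bern m k y
      = (k.descFactorial 1 : ℝ) * bern m k y - (m * y) * bern m k y := by
    intro k _; rw [cd1]; ring
  rw [Finset.sum_congr rfl h, Finset.sum_sub_distrib, ← Finset.mul_sum, momS, bern_sum, cd1]
  ring

lemma mom2 (m : ℕ) (y : ℝ) :
    ∑ k ∈ Finset.range (m + 1), ((k : ℝ) - m * y) ^ 2 * bern m k y = m * y * (1 - y) := by
  have h : ∀ k ∈ Finset.range (m + 1), ((k : ℝ) - m * y) ^ 2 * bern m k y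
      = (k.descFactorial 2 : ℝ) * bern m k y
        + (1 - 2 * (m * y)) * ((k.descFactorial 1 : ℝ) * bern m k y)
        + (m * y) ^ 2 * bern m k y := by
    intro k _; rw [cd1, cd2]; ring
  rw [Finset.sum_congr rfl h, Finset.sum_add_distrib, Finset.sum_add_distrib,
    ← Finset.mul_sum, ← Finset.mul_sum, momS, momS, bern_sum, cd1, cd2]
  ring

lemma mom4 (m : ℕ) (y : ℝ) :
    ∑ k ∈ Finset.range (m + 1), ((k : ℝ) - m * y) ^ 4 * bern m k y
      = (m:ℝ) * (m-1) * (m-2) * (m-3) * y^4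
        + (6 - 4*(m*y)) * ((m:ℝ) * (m-1) * (m-2) * y^3)
        + (7 - 12*(m*y) + 6*(m*y)^2) * ((m:ℝ) * (m-1) * y^2)
        + (1 - 4*(m*y) + 6*(m*y)^2 - 4*(m*y)^3) * ((m:ℝ) * y)
        + (m*y)^4 := by
  have h : ∀ k ∈ Finset.range (m + 1), ((k : ℝ) - m * y) ^ 4 * bern m k y
      = (k.descFactorial 4 : ℝ) * bern m k y
        + (6 - 4*((m:ℝ)*y)) * ((k.descFactorial 3 : ℝ) * bern m k y)
        + (7 - 12*((m:ℝ)*y) + 6*((m:ℝ)*y)^2) * ((k.descFactorial 2 : ℝ) * bern m k y)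
        + (1 - 4*((m:ℝ)*y) + 6*((m:ℝ)*y)^2 - 4*((m:ℝ)*y)^3)
            * ((k.descFactorial 1 : ℝ) * bern m k y)
        + ((m:ℝ)*y)^4 * bern m k y := by
    intro k _; rw [cd1, cd2, cd3, cd4]; ring
  rw [Finset.sum_congr rfl h, Finset.sum_add_distrib, Finset.sum_add_distrib,
    Finset.sum_add_distrib, Finset.sum_add_distrib,
    ← Finset.mul_sum, ← Finset.mul_sum, ← Finset.mul_sum, ← Finset.mul_sum,
    momS, momS, momS, momS, bern_sum, cd1, cd2, cd3, cd4]
  ring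

lemma mom4_le (m : ℕ) (hm : 1 ≤ m) {y : ℝ} (hy : y ∈ Set.Icc (0:ℝ) 1) :
    ∑ k ∈ Finset.range (m + 1), ((k : ℝ) - m * y) ^ 4 * bern m k y ≤ (m:ℝ) ^ 2 := by
  rw [mom4]
  have hm1 : (1:ℝ) ≤ m := by exact_mod_cast hm
  obtain ⟨hy0, hy1⟩ := hy
  set u : ℝ := y * (1 - y) with hu
  have hu0 : 0 ≤ u := mul_nonneg hy0 (by linarith)
  have hu4 : u ≤ 1/4 := by nlinarith [sq_nonneg (y - 1/2)]
  have heq : (m:ℝ) * (m-1) * (m-2) * (m-3) * y^4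
        + (6 - 4*(m*y)) * ((m:ℝ) * (m-1) * (m-2) * y^3)
        + (7 - 12*(m*y) + 6*(m*y)^2) * ((m:ℝ) * (m-1) * y^2)
        + (1 - 4*(m*y) + 6*(m*y)^2 - 4*(m*y)^3) * ((m:ℝ) * y)
        + (m*y)^4
      = (m:ℝ) * u + 3 * ((m:ℝ)^2 * u^2) - 6 * ((m:ℝ) * u^2) := by rw [hu]; ring
  rw [heq]
  have f1 : (m:ℝ) * u ≤ (m:ℝ)^2 * (1/4) := by nlinarith
  have hu2 : u^2 ≤ 1/16 := by nlinarith
  have f2 : (m:ℝ)^2 * u^2 ≤ (m:ℝ)^2 * (1/16) :=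
    mul_le_mul_of_nonneg_left hu2 (by positivity)
  have f3 : 0 ≤ (m:ℝ) * u^2 := by positivity
  nlinarith

lemma taylor_bound (F f f' : ℝ → ℝ)
    (hf : ∀ t ∈ Set.Icc (0 : ℝ) 1, HasDerivWithinAt F (f t) (Set.Icc (0 : ℝ) 1) t)
    (hf' : ∀ t ∈ Set.Icc (0 : ℝ) 1, HasDerivWithinAt f (f' t) (Set.Icc (0 : ℝ) 1) t)
    {y t : ℝ} (hy : y ∈ Set.Icc (0:ℝ) 1) (ht : t ∈ Set.Icc (0:ℝ) 1)
    (K : ℝ) (hK : ∀ u ∈ Set.Icc (0:ℝ) 1, |u - y| ≤ |t - y| → |f' u - f' y| ≤ K) :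
    |F t - F y - f y * (t - y) - f' y / 2 * (t - y) ^ 2| ≤ K * (t - y) ^ 2 := by
  set s : Set ℝ := Set.Icc (min y t) (max y t) with hs
  have hsub : s ⊆ Set.Icc (0:ℝ) 1 :=
    Set.Icc_subset_Icc (le_min hy.1 ht.1) (max_le hy.2 ht.2)
  have hys : y ∈ s := ⟨min_le_left _ _, le_max_left _ _⟩
  have hts : t ∈ s := ⟨min_le_right _ _, le_max_right _ _⟩
  have hK0 : 0 ≤ K := by simpa using hK y hy (by simp [abs_nonneg])
  have habs : ∀ u ∈ s, |u - y| ≤ |t - y| := by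
    intro u hu
    obtain ⟨hlo, hhi⟩ := hu
    rcases le_total y t with h | h
    · rw [inf_eq_left.mpr h] at hlo
      rw [sup_eq_right.mpr h] at hhi
      rw [abs_of_nonneg (by linarith : (0:ℝ) ≤ u - y),
        abs_of_nonneg (by linarith : (0:ℝ) ≤ t - y)]
      linarith
    · rw [inf_eq_right.mpr h] at hlo
      rw [sup_eq_left.mpr h] at hhi
      rw [abs_of_nonpos (by linarith : u - y ≤ 0),
        abs_of_nonpos (by linarith : t - y ≤ 0)]
      linarith
  -- step 1 : |f u - f y - f' y * (u - y)| ≤ K * |u - y|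
  have h1 : ∀ u ∈ s, |f u - f y - f' y * (u - y)| ≤ K * |u - y| := by
    intro u hu
    have hφ : ∀ v ∈ s, HasDerivWithinAt (fun w => f w - f' y * w) (f' v - f' y) s v := by
      intro v hv
      exact ((hf' v (hsub hv)).mono hsub).sub
        (((hasDerivWithinAt_id v s).const_mul (f' y)).congr_deriv (mul_one _))
    have := Convex.norm_image_sub_le_of_norm_hasDerivWithin_le hφ
      (fun v hv => by simpa [Real.norm_eq_abs] using hK v (hsub hv) (habs v hv)) (convex_Icc _ _) hys hu
    rw [Real.norm_eq_abs, Real.norm_eq_abs] at this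
    calc |f u - f y - f' y * (u - y)|
        = |(f u - f' y * u) - (f y - f' y * y)| := by ring_nf
      _ ≤ K * |u - y| := this
  -- step 2
  have hg : ∀ u ∈ s, HasDerivWithinAt
      (fun w => F w - f y * w - f' y / 2 * (w - y) ^ 2)
      (f u - f y - f' y * (u - y)) s u := by
    intro u hu
    have hF := (hf u (hsub hu)).mono hsub
    have hl : HasDerivWithinAt (fun w : ℝ => f y * w) (f y) s u :=
      ((hasDerivWithinAt_id u s).const_mul (f y)).congr_deriv (mul_one _)
    have hq : HasDerivWithinAt (fun w : ℝ => f' y / 2 * (w - y) ^ 2) (f' y * (u - y)) s u := by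
      have := (((hasDerivWithinAt_id u s).sub_const y).pow 2).const_mul (f' y / 2)
      exact this.congr_deriv (by simp only [id_eq]; ring)
    exact (hF.sub hl).sub hq
  have h2 := Convex.norm_image_sub_le_of_norm_hasDerivWithin_le hg
    (fun u hu => by
      rw [Real.norm_eq_abs]
      calc |f u - f y - f' y * (u - y)| ≤ K * |u - y| := h1 u hu
        _ ≤ K * |t - y| := mul_le_mul_of_nonneg_left (habs u hu) hK0)
    (convex_Icc _ _) hys hts
  rw [Real.norm_eq_abs, Real.norm_eq_abs] at h2
  calc |F t - F y - f y * (t - y) - f' y / 2 * (t - y) ^ 2|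
      = |(F t - f y * t - f' y / 2 * (t - y) ^ 2) - (F y - f y * y - f' y / 2 * (y - y) ^ 2)| := by
        ring_nf
    _ ≤ K * |t - y| * |t - y| := h2
    _ = K * (t - y) ^ 2 := by rw [mul_assoc, ← abs_mul, ← sq, abs_sq]

lemma main_est (F f f' : ℝ → ℝ)
    (hf : ∀ t ∈ Set.Icc (0 : ℝ) 1, HasDerivWithinAt F (f t) (Set.Icc (0 : ℝ) 1) t)
    (hf' : ∀ t ∈ Set.Icc (0 : ℝ) 1, HasDerivWithinAt f (f' t) (Set.Icc (0 : ℝ) 1) t)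
    (hf'c : ContinuousOn f' (Set.Icc (0 : ℝ) 1)) (ε : ℝ) (hε : 0 < ε) :
    ∃ N : ℕ, ∀ m : ℕ, N ≤ m → ∀ y ∈ Set.Icc (0:ℝ) 1,
      |bsmooth m F y - F y - y * (1 - y) / (2 * (m : ℝ)) * f' y| ≤ ε * (m : ℝ)⁻¹ := by
  obtain ⟨M, hM⟩ := isCompact_Icc.exists_bound_of_continuousOn hf'c
  have hM0 : 0 ≤ M := le_trans (norm_nonneg _) (hM 0 ⟨le_refl _, zero_le_one⟩)
  have huc := isCompact_Icc.uniformContinuousOn_of_continuous hf'c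
  rw [Metric.uniformContinuousOn_iff] at huc
  obtain ⟨δ, hδ0, hδ⟩ := huc (ε / 2) (by positivity)
  set C4 : ℝ := 8 * M / δ ^ 2 with hC4
  have hC40 : 0 ≤ C4 := by positivity
  -- pointwise Taylor bound
  have key : ∀ y ∈ Set.Icc (0:ℝ) 1, ∀ t ∈ Set.Icc (0:ℝ) 1,
      |F t - F y - f y * (t - y) - f' y / 2 * (t - y) ^ 2|
        ≤ ε / 2 * (t - y) ^ 2 + C4 * (t - y) ^ 4 := by
    intro y hy t ht
    rcases le_or_gt |t - y| (δ / 2) with hnear | hfar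
    · have h := taylor_bound F f f' hf hf' hy ht (ε / 2) ?_
      · have h4 : 0 ≤ C4 * (t - y) ^ 4 := by positivity
        linarith
      · intro u hu hud
        have : dist u y < δ := by
          rw [Real.dist_eq]; calc |u - y| ≤ |t - y| := hud
            _ ≤ δ / 2 := hnear
            _ < δ := by linarith
        exact le_of_lt (hδ u hu y hy this)
    · have h := taylor_bound F f f' hf hf' hy ht (2 * M) ?_
      · have hsq : δ ^ 2 / 4 ≤ (t - y) ^ 2 := by
          have : δ / 2 ≤ |t - y| := le_of_lt hfar
          nlinarith [abs_nonneg (t - y), sq_abs (t - y)]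
        have h4 : 2 * M * (t - y) ^ 2 ≤ C4 * (t - y) ^ 4 := by
          rw [hC4, div_mul_eq_mul_div, le_div_iff₀ (by positivity : (0:ℝ) < δ ^ 2)]
          nlinarith [mul_le_mul_of_nonneg_left hsq (by positivity : (0:ℝ) ≤ 2 * M * (t - y) ^ 2)]
        have h2 : 0 ≤ ε / 2 * (t - y) ^ 2 := by positivity
        linarith
      · intro u hu _
        calc |f' u - f' y| ≤ |f' u| + |f' y| := abs_sub _ _
          _ ≤ M + M := add_le_add (hM u hu) (hM y hy)
          _ = 2 * M := by ring
  refine ⟨max 1 (Nat.ceil (2 * C4 / ε) + 1), fun m hm y hy => ?_⟩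
  have hm1 : 1 ≤ m := le_trans (le_max_left _ _) hm
  have hmR : (1:ℝ) ≤ (m:ℝ) := by exact_mod_cast hm1
  have hm0 : (m:ℝ) ≠ 0 := by positivity
  have hmC : 2 * C4 / ε ≤ (m:ℝ) := by
    have h1 : Nat.ceil (2 * C4 / ε) + 1 ≤ m := le_trans (le_max_right _ _) hm
    calc 2 * C4 / ε ≤ (Nat.ceil (2 * C4 / ε) : ℝ) := Nat.le_ceil _
      _ ≤ (m : ℝ) := by exact_mod_cast le_trans (Nat.le_succ _) h1
  set g : ℝ → ℝ := fun t => F t - F y - f y * (t - y) - f' y / 2 * (t - y) ^ 2 with hg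
  have hkm : ∀ k ∈ Finset.range (m + 1), ((k:ℝ) / m) ∈ Set.Icc (0:ℝ) 1 := by
    intro k hk
    have hkm' : (k:ℝ) ≤ m := by
      exact_mod_cast Nat.lt_succ_iff.mp (Finset.mem_range.mp hk)
    exact ⟨by positivity, by rw [div_le_one (by positivity)]; exact hkm'⟩
  have hsplit : bsmooth m F y - F y - y * (1 - y) / (2 * (m : ℝ)) * f' y
      = ∑ k ∈ Finset.range (m + 1), g ((k:ℝ) / m) * bern m k y := by
    have key2 : ∀ k ∈ Finset.range (m + 1), F ((k:ℝ)/m) * bern m k y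
        = F y * bern m k y
          + f y * (1/(m:ℝ)) * (((k:ℝ) - m*y) * bern m k y)
          + f' y / 2 * (1/(m:ℝ)^2) * ((((k:ℝ) - m*y)) ^ 2 * bern m k y)
          + g ((k:ℝ)/m) * bern m k y := by
      intro k _
      have hgv : g ((k:ℝ)/m) = F ((k:ℝ)/m) - F y - f y * ((k:ℝ)/m - y)
          - f' y / 2 * ((k:ℝ)/m - y) ^ 2 := rfl
      have hd : (k:ℝ)/m - y = ((k:ℝ) - m*y) * (1/(m:ℝ)) := by field_simp
      rw [hgv, hd]; ring
    unfold bsmooth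
    rw [Finset.sum_congr rfl key2, Finset.sum_add_distrib, Finset.sum_add_distrib,
      Finset.sum_add_distrib, ← Finset.mul_sum, ← Finset.mul_sum, ← Finset.mul_sum,
      mom1, mom2, bern_sum]
    field_simp
    ring
  rw [hsplit]
  have hb : ∀ k ∈ Finset.range (m + 1), 0 ≤ bern m k y := fun k _ => bern_nonneg hy
  calc |∑ k ∈ Finset.range (m + 1), g ((k:ℝ) / m) * bern m k y|
      ≤ ∑ k ∈ Finset.range (m + 1), |g ((k:ℝ) / m) * bern m k y| :=
        Finset.abs_sum_le_sum_abs _ _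
    _ ≤ ∑ k ∈ Finset.range (m + 1),
          (ε / 2 * ((k:ℝ)/m - y) ^ 2 + C4 * ((k:ℝ)/m - y) ^ 4) * bern m k y := by
        refine Finset.sum_le_sum fun k hk => ?_
        rw [abs_mul, abs_of_nonneg (hb k hk)]
        exact mul_le_mul_of_nonneg_right (key y hy _ (hkm k hk)) (hb k hk)
    _ = (ε / 2 * (1/(m:ℝ)^2)) * ∑ k ∈ Finset.range (m + 1), ((k:ℝ) - m*y) ^ 2 * bern m k y
        + (C4 * (1/(m:ℝ)^4)) * ∑ k ∈ Finset.range (m + 1), ((k:ℝ) - m*y) ^ 4 * bern m k y := by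
        rw [Finset.mul_sum, Finset.mul_sum, ← Finset.sum_add_distrib]
        refine Finset.sum_congr rfl fun k _ => ?_
        have hd : (k:ℝ)/m - y = ((k:ℝ) - m*y) * (1/(m:ℝ)) := by field_simp
        rw [hd]; ring
    _ ≤ ε / 2 * (1/(m:ℝ)) + C4 * (1/(m:ℝ)^2) := by
        rw [mul_assoc, mul_assoc]
        have e2 : (1/(m:ℝ)^2) * ∑ k ∈ Finset.range (m + 1), ((k:ℝ) - m*y) ^ 2 * bern m k y
            = y * (1 - y) / m := by rw [mom2]; field_simp
        have e4 : (1/(m:ℝ)^4) * ∑ k ∈ Finset.range (m + 1), ((k:ℝ) - m*y) ^ 4 * bern m k y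
            ≤ 1/(m:ℝ)^2 := by
          have := mom4_le m hm1 hy
          rw [show (1:ℝ)/(m:ℝ)^2 = (1/(m:ℝ)^4) * (m:ℝ)^2 by field_simp]
          exact mul_le_mul_of_nonneg_left this (by positivity)
        have hyy : y * (1 - y) ≤ 1 := by nlinarith [hy.1, hy.2]
        have e2' : ε / 2 * ((1/(m:ℝ)^2) * ∑ k ∈ Finset.range (m + 1),
            ((k:ℝ) - m*y) ^ 2 * bern m k y) ≤ ε / 2 * (1/(m:ℝ)) := by
          rw [e2]
          refine mul_le_mul_of_nonneg_left ?_ (by positivity)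
          rw [div_le_div_iff₀ (by positivity) (by positivity)]
          nlinarith
        exact add_le_add e2' (mul_le_mul_of_nonneg_left e4 hC40)
    _ ≤ ε * (m:ℝ)⁻¹ := by
        rw [show ε * (m:ℝ)⁻¹ = ε / 2 * (1/(m:ℝ)) + ε / 2 * (1/(m:ℝ)) by ring]
        refine add_le_add le_rfl ?_
        rw [show C4 * (1/(m:ℝ)^2) = (C4 / m) * (1/(m:ℝ)) by ring]
        refine mul_le_mul_of_nonneg_right ?_ (by positivity)
        rw [div_le_iff₀ (by positivity)] at hmC ⊢
        linarith


/-- If `F` is twice continuously differentiable on `[0,1]` with `f = F'`,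
then uniformly for `y ∈ [0,1]`, as `m → ∞`,
`𝓑_m(F)(y) = F(y) + (y(1−y)/(2m)) f'(y) + o(m⁻¹)`. -/
theorem bernstein_polynomial_uniform_expansion
    (F f f' : ℝ → ℝ)
    (hf : ∀ t ∈ Set.Icc (0 : ℝ) 1, HasDerivWithinAt F (f t) (Set.Icc (0 : ℝ) 1) t)
    (hf' : ∀ t ∈ Set.Icc (0 : ℝ) 1, HasDerivWithinAt f (f' t) (Set.Icc (0 : ℝ) 1) t)
    (hf'c : ContinuousOn f' (Set.Icc (0 : ℝ) 1)) :
    ∃ r : ℕ → ℝ,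
      (∀ m : ℕ, ∀ y ∈ Set.Icc (0 : ℝ) 1,
        |bsmooth m F y - F y - y * (1 - y) / (2 * (m : ℝ)) * f' y| ≤ r m) ∧
      r =o[atTop] fun m : ℕ => ((m : ℝ))⁻¹ := by
  set E : ℕ → ℝ → ℝ :=
    fun m y => |bsmooth m F y - F y - y * (1 - y) / (2 * (m : ℝ)) * f' y| with hE
  have hEc : ∀ m, ContinuousOn (E m) (Set.Icc (0:ℝ) 1) := by
    intro m
    have h1 : Continuous (fun y => bsmooth m F y) := by
      unfold bsmooth bern
      exact continuous_finset_sum _ fun k _ => by fun_prop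
    have h2 : ContinuousOn F (Set.Icc (0:ℝ) 1) :=
      fun t ht => (hf t ht).continuousWithinAt
    have h3 : Continuous (fun y : ℝ => y * (1 - y) / (2 * (m:ℝ))) := by fun_prop
    exact (((h1.continuousOn.sub h2).sub (h3.continuousOn.mul hf'c))).abs
  set r : ℕ → ℝ := fun m => sSup (E m '' Set.Icc (0:ℝ) 1) with hr
  have h01 : (0:ℝ) ∈ Set.Icc (0:ℝ) 1 := ⟨le_refl _, zero_le_one⟩
  have hne : ∀ m, (E m '' Set.Icc (0:ℝ) 1).Nonempty :=
    fun m => ⟨E m 0, Set.mem_image_of_mem _ h01⟩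
  have hbdd : ∀ m, BddAbove (E m '' Set.Icc (0:ℝ) 1) :=
    fun m => (isCompact_Icc.image_of_continuousOn (hEc m)).bddAbove
  have hle : ∀ m : ℕ, ∀ y ∈ Set.Icc (0:ℝ) 1, E m y ≤ r m :=
    fun m y hy => le_csSup (hbdd m) (Set.mem_image_of_mem _ hy)
  have hr0 : ∀ m, 0 ≤ r m := fun m => le_trans (abs_nonneg _) (hle m 0 h01)
  refine ⟨r, fun m y hy => hle m y hy, ?_⟩
  rw [isLittleO_iff]
  intro ε hε
  obtain ⟨N, hN⟩ := main_est F f f' hf hf' hf'c ε hε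
  filter_upwards [eventually_ge_atTop N] with m hm
  rw [Real.norm_eq_abs, Real.norm_eq_abs, abs_of_nonneg (hr0 m),
    abs_of_nonneg (by positivity : (0:ℝ) ≤ ((m:ℝ))⁻¹)]
  refine csSup_le (hne m) ?_
  rintro v ⟨y, hy, rfl⟩
  exact hN m hm y hy
end
end

section
/- Under the MAR setup, for every y ∈ [0,1] and m ∈ ℕ, the variance of the Bernstein-smoothed IPW pseudo estimator admits the exact representation Var(F̃_{n,m}(y)) = n⁻¹ { Σ_{k=0}^m Σ_{ℓ=0}^m E[ F_{Y₁|X₁}((k∧ℓ)/m) / π(X₁) ] b_{m,k}(y) b_{m,ℓ}(y) − (𝓑_m(F)(y))² }, where k∧ℓ = min(k,ℓ) and F_{Y₁|X₁}(t) = P(Y₁ ≤ t | X₁). -/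
open MeasureTheory ProbabilityTheory Filter Asymptotics

noncomputable section

/-- Indicator `𝟙{t ≤ y}` as a real number. -/
def ind (t y : ℝ) : ℝ := if t ≤ y then 1 else 0

/-- The IPW pseudo-empirical CDF
`F̃_n(y) = n⁻¹ ∑_{i<n} (δ_i / π(X_i)) 𝟙{Y_i ≤ y}` (known propensities). -/
def tildeF {Ω α : Type*} (Y : ℕ → Ω → ℝ) (X : ℕ → Ω → α) (δ : ℕ → Ω → ℝ) (π : α → ℝ)
    (n : ℕ) (y : ℝ) (ω : Ω) : ℝ :=
  (n : ℝ)⁻¹ * ∑ i ∈ Finset.range n, δ i ω / π (X i ω) * ind (Y i ω) y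

/-- The Bernstein-smoothed IPW pseudo estimator `F̃_{n,m}(y) = 𝓑_m(F̃_n)(y)`. -/
def tildeFnm {Ω α : Type*} (Y : ℕ → Ω → ℝ) (X : ℕ → Ω → α) (δ : ℕ → Ω → ℝ) (π : α → ℝ)
    (n m : ℕ) (y : ℝ) (ω : Ω) : ℝ :=
  bsmooth m (fun t => tildeF Y X δ π n t ω) y

/-- Exact variance representation for the Bernstein-smoothed IPW pseudo
estimator:
`Var(F̃_{n,m}(y)) = n⁻¹ { ∑_{k,ℓ} E[F_{Y₁|X₁}((k∧ℓ)/m)/π(X₁)] b_{m,k}(y) b_{m,ℓ}(y) − 𝓑_m(F)(y)² }`. -/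
theorem variance_pseudo_exact
    {Ω : Type*} [MeasurableSpace Ω] [StandardBorelSpace Ω]
    {α : Type*} [MeasurableSpace α] [MeasurableSingletonClass α] [Countable α]
    (μ : Measure Ω) [IsProbabilityMeasure μ]
    (Y : ℕ → Ω → ℝ) (X : ℕ → Ω → α) (δ : ℕ → Ω → ℝ)
    (hYm : ∀ i, Measurable (Y i)) (hXm : ∀ i, Measurable (X i)) (hδm : ∀ i, Measurable (δ i))
    (hY01 : ∀ i ω, Y i ω ∈ Set.Icc (0 : ℝ) 1)
    (hδ01 : ∀ i ω, δ i ω = 0 ∨ δ i ω = 1)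
    -- the triples (Y_i, X_i, δ_i) are i.i.d.
    (hiid : ∀ i j, IdentDistrib (fun ω => (Y i ω, X i ω, δ i ω))
      (fun ω => (Y j ω, X j ω, δ j ω)) μ μ)
    (hindep : iIndepFun (fun i ω => (Y i ω, X i ω, δ i ω)) μ)
    -- Assumption (A1): the propensity score is bounded below by πmin > 0
    (π : α → ℝ) (πmin : ℝ) (hπmin : 0 < πmin) (hπ : ∀ x, πmin ≤ π x)
    -- π(X_i) = P(δ_i = 1 | X_i)
    (hprop : ∀ i, μ[δ i | MeasurableSpace.comap (X i) inferInstance]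
      =ᵐ[μ] fun ω => π (X i ω))
    -- MAR: δ_i is independent of Y_i conditionally on X_i
    (hMAR : ∀ i, CondIndepFun (MeasurableSpace.comap (X i) inferInstance)
      ((hXm i).comap_le) (δ i) (Y i) μ)
    -- F is the CDF of the Y_i
    (F : ℝ → ℝ) (hF : ∀ t, F t = (μ {ω | Y 0 ω ≤ t}).toReal)
    -- F_{Y₁|X₁}: the conditional CDF of Y_i given X_i
    (Fc : α → ℝ → ℝ)
    (hFc : ∀ i t, μ[fun ω => ind (Y i ω) t | MeasurableSpace.comap (X i) inferInstance]
      =ᵐ[μ] fun ω => Fc (X i ω) t)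
    (n : ℕ) (hn : 0 < n) (m : ℕ) (y : ℝ) (hy : y ∈ Set.Icc (0 : ℝ) 1) :
    variance (tildeFnm Y X δ π n m y) μ
      = (n : ℝ)⁻¹ *
          ((∑ k ∈ Finset.range (m + 1), ∑ l ∈ Finset.range (m + 1),
              (∫ ω, Fc (X 0 ω) (((min k l : ℕ) : ℝ) / (m : ℝ)) / π (X 0 ω) ∂μ)
                * bern m k y * bern m l y)
            - (bsmooth m F y) ^ 2) := by
  classical
  have hm' : MeasurableSpace.comap (X 0) inferInstance ≤ ‹MeasurableSpace Ω› := (hXm 0).comap_le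
  have hπpos : ∀ x, 0 < π x := fun x => hπmin.trans_le (hπ x)
  -- measurability of indicators
  have hindm : ∀ (c : ℝ), Measurable fun ω => ind (Y 0 ω) c := by
    intro c
    unfold ind
    exact Measurable.ite (measurableSet_le (hYm 0) measurable_const) measurable_const
      measurable_const
  -- bounded measurable functions are integrable
  have hbint : ∀ (u : Ω → ℝ) (C : ℝ), Measurable u → (∀ ω, |u ω| ≤ C) → Integrable u μ := by
    intro u C hu hb
    exact memLp_one_iff_integrable.mp (MemLp.of_bound hu.aestronglyMeasurable C
      (Filter.Eventually.of_forall fun ω => by simpa [Real.norm_eq_abs] using hb ω))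
  have hmul_le : ∀ (a b C : ℝ), |a| ≤ C → |b| ≤ 1 → |a * b| ≤ C := by
    intro a b C h1 h2
    rw [abs_mul]
    nlinarith [abs_nonneg a, abs_nonneg b]
  have hind1 : ∀ ω (c : ℝ), |ind (Y 0 ω) c| ≤ 1 := by
    intro ω c
    unfold ind
    split_ifs <;> norm_num
  have hδind1 : ∀ ω (c : ℝ), |δ 0 ω * ind (Y 0 ω) c| ≤ 1 := by
    intro ω c
    rcases hδ01 0 ω with h | h <;> simp [h, hind1 ω c]
  -- the key conditional expectation factorization from MAR
  have hcond : ∀ t : ℝ, μ[(fun ω => δ 0 ω * ind (Y 0 ω) t) |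
      MeasurableSpace.comap (X 0) inferInstance]
      =ᵐ[μ] fun ω => π (X 0 ω) * Fc (X 0 ω) t := by
    intro t
    have heq1 : (fun ω => δ 0 ω * ind (Y 0 ω) t)
        = Set.indicator (δ 0 ⁻¹' {1} ∩ Y 0 ⁻¹' Set.Iic t) (fun _ => (1 : ℝ)) := by
      funext ω
      rcases hδ01 0 ω with h | h <;>
        by_cases hYt : Y 0 ω ≤ t <;>
        simp [Set.indicator, ind, h, hYt]
    have heq2 : δ 0 = Set.indicator (δ 0 ⁻¹' {1}) (fun _ => (1 : ℝ)) := by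
      funext ω
      rcases hδ01 0 ω with h | h <;> simp [Set.indicator, h]
    have heq3 : (fun ω => ind (Y 0 ω) t)
        = Set.indicator (Y 0 ⁻¹' Set.Iic t) (fun _ => (1 : ℝ)) := by
      funext ω
      by_cases hYt : Y 0 ω ≤ t <;> simp [Set.indicator, ind, hYt]
    have hfac := (condIndepFun_iff_condExp_inter_preimage_eq_mul (μ := μ)
      (hδm 0) (hYm 0)).mp (hMAR 0) {1} (Set.Iic t)
      (measurableSet_singleton 1) measurableSet_Iic
    rw [heq1]
    refine hfac.trans ?_
    have h2 := hprop 0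
    rw [heq2] at h2
    have h3 := hFc 0 t
    rw [heq3] at h3
    filter_upwards [h2, h3] with ω e2 e3
    rw [e2, e3]
  -- key integral identity obtained by conditioning on X 0
  have keyH : ∀ (t : ℝ) (h : α → ℝ) (C : ℝ), (∀ x, |h x| ≤ C) →
      ∫ ω, h (X 0 ω) * (δ 0 ω * ind (Y 0 ω) t) ∂μ
        = ∫ ω, h (X 0 ω) * (π (X 0 ω) * Fc (X 0 ω) t) ∂μ := by
    intro t h C hhb
    set f : Ω → ℝ := fun ω => h (X 0 ω) with hfdef
    set gg : Ω → ℝ := fun ω => δ 0 ω * ind (Y 0 ω) t with hggdef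
    have hfsm : StronglyMeasurable[MeasurableSpace.comap (X 0) inferInstance] f :=
      ((measurable_of_countable h).comp (Measurable.of_comap_le le_rfl)).stronglyMeasurable
    have hggm : Measurable gg := (hδm 0).mul (hindm t)
    have hgg_int : Integrable gg μ := hbint gg 1 hggm (fun ω => hδind1 ω t)
    have hfg_int : Integrable (f * gg) μ := by
      refine hbint (f * gg) C (((measurable_of_countable h).comp (hXm 0)).mul hggm) ?_
      intro ω
      exact hmul_le _ _ _ (hhb (X 0 ω)) (hδind1 ω t)
    calc ∫ ω, h (X 0 ω) * (δ 0 ω * ind (Y 0 ω) t) ∂μ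
        = ∫ ω, (f * gg) ω ∂μ := rfl
      _ = ∫ ω, (μ[f * gg | MeasurableSpace.comap (X 0) inferInstance]) ω ∂μ :=
          (integral_condExp hm').symm
      _ = ∫ ω, (f * μ[gg | MeasurableSpace.comap (X 0) inferInstance]) ω ∂μ :=
          integral_congr_ae (condExp_mul_of_stronglyMeasurable_left hfsm hfg_int hgg_int)
      _ = ∫ ω, h (X 0 ω) * (π (X 0 ω) * Fc (X 0 ω) t) ∂μ := by
          refine integral_congr_ae ?_
          filter_upwards [hcond t] with ω e
          simp only [Pi.mul_apply, hfdef]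
          rw [e]
  -- first moment identity
  have keyA : ∀ t : ℝ, ∫ ω, (π (X 0 ω))⁻¹ * (δ 0 ω * ind (Y 0 ω) t) ∂μ = F t := by
    intro t
    have hb : ∀ x, |(π x)⁻¹| ≤ πmin⁻¹ := by
      intro x
      rw [abs_of_pos (inv_pos.mpr (hπpos x))]
      exact inv_anti₀ hπmin (hπ x)
    rw [keyH t (fun x => (π x)⁻¹) πmin⁻¹ hb]
    have hpt : (fun ω => (π (X 0 ω))⁻¹ * (π (X 0 ω) * Fc (X 0 ω) t))
        = fun ω => Fc (X 0 ω) t := by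
      funext ω
      have hne : π (X 0 ω) ≠ 0 := (hπpos _).ne'
      field_simp
    rw [hpt, integral_congr_ae (hFc 0 t).symm, integral_condExp hm', hF t]
    have hset : MeasurableSet {ω | Y 0 ω ≤ t} := measurableSet_le (hYm 0) measurable_const
    have : (fun ω => ind (Y 0 ω) t) = Set.indicator {ω | Y 0 ω ≤ t} (fun _ => (1 : ℝ)) := by
      funext ω
      by_cases hYt : Y 0 ω ≤ t <;> simp [Set.indicator, ind, hYt]
    rw [this, integral_indicator_const (1 : ℝ) hset]
    simp
    rfl
  -- second moment identity
  have keyB : ∀ t : ℝ, ∫ ω, ((π (X 0 ω)) ^ 2)⁻¹ * (δ 0 ω * ind (Y 0 ω) t) ∂μ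
      = ∫ ω, Fc (X 0 ω) t / π (X 0 ω) ∂μ := by
    intro t
    have hb : ∀ x, |((π x) ^ 2)⁻¹| ≤ (πmin ^ 2)⁻¹ := by
      intro x
      rw [abs_of_pos (inv_pos.mpr (pow_pos (hπpos x) 2))]
      exact inv_anti₀ (pow_pos hπmin 2) (pow_le_pow_left₀ hπmin.le (hπ x) 2)
    rw [keyH t (fun x => ((π x) ^ 2)⁻¹) (πmin ^ 2)⁻¹ hb]
    refine integral_congr_ae (Filter.Eventually.of_forall fun ω => ?_)
    have hne : π (X 0 ω) ≠ 0 := (hπpos _).ne'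
    field_simp

  -- the summands
  set g : ℝ × α × ℝ → ℝ := fun p => p.2.2 / π p.2.1 *
      ∑ k ∈ Finset.range (m + 1), ind p.1 ((k : ℝ) / (m : ℝ)) * bern m k y with hgdef
  set W : ℕ → Ω → ℝ := fun i => g ∘ fun ω => (Y i ω, X i ω, δ i ω) with hWdef
  have hWapp : ∀ i ω, W i ω = δ i ω / π (X i ω) *
      ∑ k ∈ Finset.range (m + 1), ind (Y i ω) ((k : ℝ) / (m : ℝ)) * bern m k y := by
    intro i ω; rfl
  have hgm : Measurable g := by
    rw [hgdef]
    refine Measurable.mul ?_ ?_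
    · exact (measurable_snd.snd).div ((measurable_of_countable π).comp measurable_snd.fst)
    · refine Finset.measurable_sum _ fun k _ => Measurable.mul_const ?_ _
      unfold ind
      exact Measurable.ite (measurableSet_le measurable_fst measurable_const)
        measurable_const measurable_const
  -- boundedness of the summands
  have habsδπ : ∀ i ω, |δ i ω / π (X i ω)| ≤ πmin⁻¹ := by
    intro i ω
    rcases hδ01 i ω with h | h
    · rw [h]; simpa using (inv_pos.mpr hπmin).le
    · rw [h, abs_div, abs_one, abs_of_pos (hπpos _), one_div]
      exact inv_anti₀ hπmin (hπ _)
  have hWbd : ∀ i ω, |W i ω| ≤ πmin⁻¹ * ∑ k ∈ Finset.range (m + 1), |bern m k y| := by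
    intro i ω
    rw [hWapp, abs_mul]
    refine mul_le_mul (habsδπ i ω) ?_ (abs_nonneg _)
      (le_trans (abs_nonneg _) (habsδπ i ω))
    refine le_trans (Finset.abs_sum_le_sum_abs _ _) (Finset.sum_le_sum fun k _ => ?_)
    rw [abs_mul]
    calc |ind (Y i ω) ((k : ℝ) / (m : ℝ))| * |bern m k y| ≤ 1 * |bern m k y| := by
          refine mul_le_mul_of_nonneg_right ?_ (abs_nonneg _)
          unfold ind; split_ifs <;> norm_num
      _ = |bern m k y| := one_mul _
  have hWmem : ∀ i, MemLp (W i) 2 μ := by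
    intro i
    refine MemLp.of_bound
      (hgm.comp (((hYm i).prodMk ((hXm i).prodMk (hδm i))))).aestronglyMeasurable
      (πmin⁻¹ * ∑ k ∈ Finset.range (m + 1), |bern m k y|)
      (Filter.Eventually.of_forall fun ω => ?_)
    simpa [Real.norm_eq_abs] using hWbd i ω
  -- independence and identical distribution of the summands
  have hWindep : Set.Pairwise ↑(Finset.range n) fun i j => IndepFun (W i) (W j) μ := by
    intro i _ j _ hij
    exact (hindep.indepFun hij).comp hgm hgm
  have hWid : ∀ i, variance (W i) μ = variance (W 0) μ := fun i =>
    ((hiid i 0).comp hgm).variance_eq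
  -- rewrite the estimator as a normalized sum
  have hA : tildeFnm Y X δ π n m y = fun ω => (n : ℝ)⁻¹ * ∑ i ∈ Finset.range n, W i ω := by
    funext ω
    simp only [tildeFnm, bsmooth, tildeF, hWapp, Finset.sum_mul, Finset.mul_sum]
    rw [Finset.sum_comm]
    exact Finset.sum_congr rfl fun i _ => Finset.sum_congr rfl fun k _ => by ring
  -- variance of the normalized sum
  have hvar_sum : variance (fun ω => ∑ i ∈ Finset.range n, W i ω) μ
      = (n : ℝ) * variance (W 0) μ := by
    have hfn : (fun ω => ∑ i ∈ Finset.range n, W i ω) = ∑ i ∈ Finset.range n, W i := by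
      funext ω; simp
    rw [hfn, IndepFun.variance_sum (fun i _ => hWmem i) hWindep]
    simp [hWid]
  have hvar1 : variance (tildeFnm Y X δ π n m y) μ = (n : ℝ)⁻¹ * variance (W 0) μ := by
    rw [hA, variance_const_mul, hvar_sum]
    have hnne : (n : ℝ) ≠ 0 := Nat.cast_ne_zero.mpr hn.ne'
    field_simp
  -- first moment
  have hBint : ∀ c : ℝ, Integrable (fun ω => (π (X 0 ω))⁻¹ * (δ 0 ω * ind (Y 0 ω) c)) μ := by
    intro c
    refine hbint _ πmin⁻¹ (((measurable_of_countable fun x => (π x)⁻¹).comp (hXm 0)).mul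
      ((hδm 0).mul (hindm c))) fun ω => ?_
    refine hmul_le _ _ _ ?_ (hδind1 ω c)
    rw [abs_of_pos (inv_pos.mpr (hπpos _))]
    exact inv_anti₀ hπmin (hπ _)
  have hAint : ∀ c : ℝ, Integrable (fun ω => ((π (X 0 ω)) ^ 2)⁻¹ * (δ 0 ω * ind (Y 0 ω) c)) μ := by
    intro c
    refine hbint _ (πmin ^ 2)⁻¹ (((measurable_of_countable fun x => ((π x) ^ 2)⁻¹).comp
      (hXm 0)).mul ((hδm 0).mul (hindm c))) fun ω => ?_
    refine hmul_le _ _ _ ?_ (hδind1 ω c)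
    rw [abs_of_pos (inv_pos.mpr (pow_pos (hπpos _) 2))]
    exact inv_anti₀ (pow_pos hπmin 2) (pow_le_pow_left₀ hπmin.le (hπ _) 2)
  have hEW0 : ∫ ω, W 0 ω ∂μ = bsmooth m F y := by
    have hW0 : (fun ω => W 0 ω) = fun ω => ∑ k ∈ Finset.range (m + 1),
        (π (X 0 ω))⁻¹ * (δ 0 ω * ind (Y 0 ω) ((k : ℝ) / (m : ℝ))) * bern m k y := by
      funext ω
      rw [hWapp, Finset.mul_sum]
      exact Finset.sum_congr rfl fun k _ => by
        rw [div_eq_mul_inv]; ring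
    rw [hW0, integral_finset_sum _ fun k _ => (hBint _).mul_const _]
    unfold bsmooth
    refine Finset.sum_congr rfl fun k _ => ?_
    rw [integral_mul_const, keyA]
  -- second moment
  have hmincast : ∀ k l : ℕ, ((min k l : ℕ) : ℝ) / (m : ℝ)
      = min ((k : ℝ) / (m : ℝ)) ((l : ℝ) / (m : ℝ)) := by
    intro k l
    rw [Nat.cast_min, min_div_div_right (by positivity : (0 : ℝ) ≤ (m : ℝ))]
  have hindmul : ∀ (v a b : ℝ), ind v a * ind v b = ind v (min a b) := by
    intro v a b
    by_cases h1 : v ≤ a <;> by_cases h2 : v ≤ b <;> simp [ind, h1, h2, le_min_iff]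
  have hWsq : ∀ ω, W 0 ω ^ 2 = ∑ k ∈ Finset.range (m + 1), ∑ l ∈ Finset.range (m + 1),
      ((π (X 0 ω)) ^ 2)⁻¹ * (δ 0 ω * ind (Y 0 ω) (((min k l : ℕ) : ℝ) / (m : ℝ)))
        * (bern m k y * bern m l y) := by
    intro ω
    have hδsq : δ 0 ω * δ 0 ω = δ 0 ω := by rcases hδ01 0 ω with h | h <;> simp [h]
    rw [hWapp, mul_pow, sq (∑ k ∈ Finset.range (m + 1),
      ind (Y 0 ω) ((k : ℝ) / (m : ℝ)) * bern m k y), Finset.sum_mul_sum, Finset.mul_sum]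
    refine Finset.sum_congr rfl fun k _ => ?_
    rw [Finset.mul_sum]
    refine Finset.sum_congr rfl fun l _ => ?_
    rw [hmincast, ← hindmul, div_pow, pow_two (δ 0 ω), hδsq]
    field_simp
  have hEW0sq : ∫ ω, W 0 ω ^ 2 ∂μ = ∑ k ∈ Finset.range (m + 1), ∑ l ∈ Finset.range (m + 1),
      (∫ ω, Fc (X 0 ω) (((min k l : ℕ) : ℝ) / (m : ℝ)) / π (X 0 ω) ∂μ)
        * bern m k y * bern m l y := by
    rw [show (fun ω => W 0 ω ^ 2) = fun ω => ∑ k ∈ Finset.range (m + 1),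
        ∑ l ∈ Finset.range (m + 1),
        ((π (X 0 ω)) ^ 2)⁻¹ * (δ 0 ω * ind (Y 0 ω) (((min k l : ℕ) : ℝ) / (m : ℝ)))
          * (bern m k y * bern m l y) from funext hWsq]
    rw [integral_finset_sum _ fun k _ => integrable_finset_sum _ fun l _ =>
      (hAint _).mul_const _]
    refine Finset.sum_congr rfl fun k _ => ?_
    rw [integral_finset_sum _ fun l _ => (hAint _).mul_const _]
    refine Finset.sum_congr rfl fun l _ => ?_
    rw [integral_mul_const, keyB, mul_assoc]
  -- conclusion
  rw [hvar1, variance_eq_sub (hWmem 0)]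
  simp only [Pi.pow_apply]
  rw [hEW0sq, hEW0]
end
end

section
/- Under Assumptions A1 and A2, the nonparametric propensity-score estimator is uniformly n⁻¹-accurate in L²: for each i ∈ {1,…,n}, E[(π̂_i(X_{1:n}) − π(X_i))²] = O(n⁻¹) as n → ∞, where the implicit constant may depend on π_min and p_min but not on i. -/
open MeasureTheory ProbabilityTheory Filter Asymptotics

noncomputable section

/-- The nonparametric propensity-score estimator
`π̂_i(X_{1:n}) = (∑_j δ_j 𝟙{X_j = X_i}) / (∑_k 𝟙{X_k = X_i})`. -/
def piHat {Ω α : Type*} [DecidableEq α] (X : ℕ → Ω → α) (δ : ℕ → Ω → ℝ)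
    (n i : ℕ) (ω : Ω) : ℝ :=
  (∑ j ∈ Finset.range n, δ j ω * (if X j ω = X i ω then 1 else 0)) /
    ∑ k ∈ Finset.range n, (if X k ω = X i ω then (1 : ℝ) else 0)

/-- The feasible IPW empirical CDF `F̂_n(y) = n⁻¹ ∑_{i<n} (δ_i / π̂_i) 𝟙{Y_i ≤ y}`. -/
def hatF {Ω α : Type*} [DecidableEq α] (Y : ℕ → Ω → ℝ) (X : ℕ → Ω → α) (δ : ℕ → Ω → ℝ)
    (n : ℕ) (y : ℝ) (ω : Ω) : ℝ :=
  (n : ℝ)⁻¹ * ∑ i ∈ Finset.range n, δ i ω / piHat X δ n i ω * ind (Y i ω) y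

/-- The Bernstein-smoothed feasible estimator `F̂_{n,m}(y) = 𝓑_m(F̂_n)(y)`. -/
def hatFnm {Ω α : Type*} [DecidableEq α] (Y : ℕ → Ω → ℝ) (X : ℕ → Ω → α) (δ : ℕ → Ω → ℝ)
    (n m : ℕ) (y : ℝ) (ω : Ω) : ℝ :=
  bsmooth m (fun t => hatF Y X δ n t ω) y


lemma aux_pointwise {α : Type*} [DecidableEq α] [Fintype α]
    (n : ℕ) (hn : 1 ≤ n) (i : ℕ) (hi : i < n)
    (d : ℕ → ℝ) (xs : ℕ → α) (π p : α → ℝ) (pmin : ℝ) (hpmin : 0 < pmin)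
    (hπ0 : ∀ x, 0 ≤ π x) (hπ1 : ∀ x, π x ≤ 1)
    (hd : ∀ j, 0 ≤ d j ∧ d j ≤ 1) (hp : ∀ x, pmin ≤ p x) :
    ((∑ j ∈ Finset.range n, d j * (if xs j = xs i then 1 else 0)) /
        (∑ k ∈ Finset.range n, (if xs k = xs i then (1 : ℝ) else 0)) - π (xs i)) ^ 2 ≤
      (2 / (n * pmin)) ^ 2 *
        ∑ x : α, ((∑ j ∈ Finset.range n, (d j - π x) * (if xs j = x then 1 else 0)) ^ 2 +
          (∑ j ∈ Finset.range n, ((if xs j = x then (1 : ℝ) else 0) - p x)) ^ 2) := by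
  have hnpos : (0:ℝ) < n := by exact_mod_cast hn
  have hnp : (0:ℝ) < n * pmin / 2 := by positivity
  set x0 := xs i with hx0
  set S := ∑ j ∈ Finset.range n, d j * (if xs j = x0 then (1:ℝ) else 0) with hS
  set N := ∑ k ∈ Finset.range n, (if xs k = x0 then (1:ℝ) else 0) with hN
  set T := ∑ j ∈ Finset.range n, (d j - π x0) * (if xs j = x0 then (1:ℝ) else 0) with hT
  set W := ∑ j ∈ Finset.range n, ((if xs j = x0 then (1:ℝ) else 0) - p x0) with hW
  have hN1 : (1:ℝ) ≤ N := by
    calc (1:ℝ) = if xs i = x0 then 1 else 0 := by rw [if_pos rfl]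
      _ ≤ N := Finset.single_le_sum (f := fun k => (if xs k = x0 then (1:ℝ) else 0))
          (fun k _ => by positivity) (Finset.mem_range.2 hi)
  have hNpos : (0:ℝ) < N := lt_of_lt_of_le one_pos hN1
  have hS0 : 0 ≤ S := Finset.sum_nonneg fun j _ => by
    have := (hd j).1; positivity
  have hSN : S ≤ N := Finset.sum_le_sum fun j _ => by
    by_cases h : xs j = x0 <;> simp [h, (hd j).2]
  have hTeq : T = S - π x0 * N := by
    rw [hT, hS, hN, Finset.mul_sum, ← Finset.sum_sub_distrib]
    exact Finset.sum_congr rfl fun j _ => by ring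
  have hWeq : W = N - n * p x0 := by
    rw [hW, hN, Finset.sum_sub_distrib, Finset.sum_const, Finset.card_range]
    ring_nf
  -- reduce to the x0 term
  have hkey : (2 / (↑n * pmin)) ^ 2 * (T ^ 2 + W ^ 2) ≤
      (2 / (↑n * pmin)) ^ 2 *
        ∑ x : α, ((∑ j ∈ Finset.range n, (d j - π x) * (if xs j = x then 1 else 0)) ^ 2 +
          (∑ j ∈ Finset.range n, ((if xs j = x then (1 : ℝ) else 0) - p x)) ^ 2) := by
    apply mul_le_mul_of_nonneg_left _ (by positivity)
    have := Finset.single_le_sum (f := fun x : α =>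
      ((∑ j ∈ Finset.range n, (d j - π x) * (if xs j = x then (1:ℝ) else 0)) ^ 2 +
        (∑ j ∈ Finset.range n, ((if xs j = x then (1 : ℝ) else 0) - p x)) ^ 2))
      (fun x _ => by positivity) (Finset.mem_univ x0)
    simpa [hT, hW] using this
  refine le_trans ?_ hkey
  by_cases hcase : n * pmin / 2 ≤ N
  · have hdiv : S / N - π x0 = T / N := by
      rw [hTeq]; field_simp
    rw [hdiv, div_pow]
    have h1 : T ^ 2 / N ^ 2 ≤ T ^ 2 / (↑n * pmin / 2) ^ 2 :=
      div_le_div_of_nonneg_left (sq_nonneg T) (by positivity) (by nlinarith)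
    have h2 : T ^ 2 / (↑n * pmin / 2) ^ 2 = (2 / (↑n * pmin)) ^ 2 * T ^ 2 := by
      field_simp
    nlinarith [sq_nonneg W, sq_nonneg (2 / (↑n * pmin))]
  · push_neg at hcase
    have hfrac : 0 ≤ S / N := div_nonneg hS0 hNpos.le
    have hfrac1 : S / N ≤ 1 := (div_le_one hNpos).2 hSN
    have hLHS : (S / N - π x0) ^ 2 ≤ 1 := by nlinarith [hπ0 x0, hπ1 x0]
    have hnp0 : ↑n * pmin ≤ ↑n * p x0 :=
      mul_le_mul_of_nonneg_left (hp x0) hnpos.le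
    have hWneg : ↑n * pmin / 2 ≤ -W := by rw [hWeq]; linarith
    have hW2 : (↑n * pmin / 2) ^ 2 ≤ W ^ 2 := by nlinarith
    have hone : (2 / (↑n * pmin)) ^ 2 * (↑n * pmin / 2) ^ 2 = 1 := by
      field_simp
    have hc : (1:ℝ) ≤ (2 / (↑n * pmin)) ^ 2 * (T ^ 2 + W ^ 2) := by
      calc (1:ℝ) = (2 / (↑n * pmin)) ^ 2 * (↑n * pmin / 2) ^ 2 := hone.symm
        _ ≤ (2 / (↑n * pmin)) ^ 2 * W ^ 2 :=
            mul_le_mul_of_nonneg_left hW2 (by positivity)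
        _ ≤ (2 / (↑n * pmin)) ^ 2 * (T ^ 2 + W ^ 2) :=
            mul_le_mul_of_nonneg_left (le_add_of_nonneg_left (sq_nonneg T)) (sq_nonneg _)
    exact hLHS.trans hc


lemma aux_sum_sq {Ω : Type*} [MeasurableSpace Ω] (μ : Measure Ω) [IsProbabilityMeasure μ]
    (n : ℕ) (Z : ℕ → Ω → ℝ) (c : ℝ)
    (hmeas : ∀ j, Measurable (Z j))
    (hbdd : ∀ j ω, |Z j ω| ≤ 1)
    (hmean : ∀ j, ∫ ω, Z j ω ∂μ = 0)
    (hvar : ∀ j, ∫ ω, (Z j ω) ^ 2 ∂μ ≤ c)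
    (hind : ∀ j k, j ≠ k → IndepFun (Z j) (Z k) μ) :
    ∫ ω, (∑ j ∈ Finset.range n, Z j ω) ^ 2 ∂μ ≤ n * c := by
  have hmem : ∀ j, MemLp (Z j) 2 μ := fun j =>
    MemLp.of_bound (hmeas j).aestronglyMeasurable 1
      (ae_of_all _ fun ω => by simpa using hbdd j ω)
  have hTmem : MemLp (∑ j ∈ Finset.range n, Z j) 2 μ :=
    memLp_finsetSum' _ fun j _ => hmem j
  have hET : μ[∑ j ∈ Finset.range n, Z j] = 0 := by
    have : (fun ω => ∑ j ∈ Finset.range n, Z j ω) = ∑ j ∈ Finset.range n, Z j := by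
      funext ω; simp [Finset.sum_apply]
    rw [← this, integral_finset_sum _ fun j _ => (hmem j).integrable one_le_two]
    simp [hmean]
  have hVsum : variance (∑ j ∈ Finset.range n, Z j) μ
      = ∑ j ∈ Finset.range n, variance (Z j) μ :=
    IndepFun.variance_sum (fun j _ => hmem j)
      (fun j _ k _ hjk => hind j k hjk)
  have hVj : ∀ j, variance (Z j) μ ≤ c := fun j => by
    rw [variance_eq_sub (hmem j), hmean j]
    simpa using hvar j
  have hmain : μ[(∑ j ∈ Finset.range n, Z j) ^ 2]
      = ∑ j ∈ Finset.range n, variance (Z j) μ := by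
    rw [← hVsum, variance_eq_sub hTmem, hET]; ring
  have : ∫ ω, (∑ j ∈ Finset.range n, Z j ω) ^ 2 ∂μ
      = μ[(∑ j ∈ Finset.range n, Z j) ^ 2] := by
    congr 1; funext ω; simp [Finset.sum_apply]
  rw [this, hmain]
  calc ∑ j ∈ Finset.range n, variance (Z j) μ ≤ ∑ _j ∈ Finset.range n, c :=
        Finset.sum_le_sum fun j _ => hVj j
    _ = n * c := by simp [Finset.sum_const, Finset.card_range, nsmul_eq_mul]

/-- Under Assumptions (A1) and (A2), the nonparametric propensity-score
estimator is uniformly `n⁻¹`-accurate in `L²`: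
`E[(π̂_i(X_{1:n}) − π(X_i))²] = O(n⁻¹)`, uniformly over `i ∈ {1,…,n}`. -/
theorem propensity_estimator_L2_rate
    {Ω : Type*} [MeasurableSpace Ω] [StandardBorelSpace Ω]
    {α : Type*} [MeasurableSpace α] [MeasurableSingletonClass α] [Countable α]
    (μ : Measure Ω) [IsProbabilityMeasure μ]
    (Y : ℕ → Ω → ℝ) (X : ℕ → Ω → α) (δ : ℕ → Ω → ℝ)
    (hYm : ∀ i, Measurable (Y i)) (hXm : ∀ i, Measurable (X i)) (hδm : ∀ i, Measurable (δ i))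
    (hY01 : ∀ i ω, Y i ω ∈ Set.Icc (0 : ℝ) 1)
    (hδ01 : ∀ i ω, δ i ω = 0 ∨ δ i ω = 1)
    -- the triples (Y_i, X_i, δ_i) are i.i.d.
    (hiid : ∀ i j, IdentDistrib (fun ω => (Y i ω, X i ω, δ i ω))
      (fun ω => (Y j ω, X j ω, δ j ω)) μ μ)
    (hindep : iIndepFun (fun i ω => (Y i ω, X i ω, δ i ω)) μ)
    -- Assumption (A1): the propensity score is bounded below by πmin > 0
    (π : α → ℝ) (πmin : ℝ) (hπmin : 0 < πmin) (hπ : ∀ x, πmin ≤ π x)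
    -- π(X_i) = P(δ_i = 1 | X_i)
    (hprop : ∀ i, μ[δ i | MeasurableSpace.comap (X i) inferInstance]
      =ᵐ[μ] fun ω => π (X i ω))
    -- MAR: δ_i is independent of Y_i conditionally on X_i
    (hMAR : ∀ i, CondIndepFun (MeasurableSpace.comap (X i) inferInstance)
      ((hXm i).comap_le) (δ i) (Y i) μ)
    [DecidableEq α]
    -- Assumption (A2): X takes finitely many values, each with probability ≥ pmin > 0
    [Finite α] (pmin : ℝ) (hpmin : 0 < pmin)
    (hp : ∀ x : α, pmin ≤ (μ (X 0 ⁻¹' {x})).toReal)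
    : ∃ C : ℝ, ∀ᶠ n in atTop, ∀ i, i < n →
      (∫ ω, (piHat X δ n i ω - π (X i ω)) ^ 2 ∂μ) ≤ C * (n : ℝ)⁻¹ := by
  cases nonempty_fintype α
  set p : α → ℝ := fun x => (μ (X 0 ⁻¹' {x})).toReal with hpdef
  have hppos : ∀ x, 0 < p x := fun x => hpmin.trans_le (hp x)
  have hδb : ∀ j ω, 0 ≤ δ j ω ∧ δ j ω ≤ 1 := fun j ω => by
    rcases hδ01 j ω with h | h <;> simp [h]
  -- bounded measurable functions are integrable
  have hbint : ∀ (f : Ω → ℝ) (C : ℝ), Measurable f → (∀ ω, |f ω| ≤ C) → Integrable f μ :=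
    fun f C hf hb => memLp_one_iff_integrable.mp
      (MemLp.of_bound hf.aestronglyMeasurable C (ae_of_all _ hb))
  -- identical distribution of the X j
  have hXd : ∀ j x, (μ (X j ⁻¹' {x})).toReal = p x := by
    intro j x
    have h : IdentDistrib (X j) (X 0) μ μ :=
      (hiid j 0).comp (u := fun q : ℝ × α × ℝ => q.2.1) measurable_snd.fst
    rw [hpdef]
    congr 1
    rw [← Measure.map_apply (hXm j) (measurableSet_singleton x),
      ← Measure.map_apply (hXm 0) (measurableSet_singleton x), h.map_eq]
  have hind_meas : ∀ j x, Measurable (fun ω => if X j ω = x then (1:ℝ) else 0) := fun j x =>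
    Measurable.ite (hXm j (measurableSet_singleton x)) measurable_const measurable_const
  have hind_int : ∀ j x, Integrable (fun ω => if X j ω = x then (1:ℝ) else 0) μ := fun j x =>
    hbint _ 1 (hind_meas j x) (fun ω => by by_cases h : X j ω = x <;> simp [h])
  have hEind : ∀ j x, ∫ ω, (if X j ω = x then (1:ℝ) else 0) ∂μ = p x := by
    intro j x
    have hs : MeasurableSet (X j ⁻¹' {x}) := hXm j (measurableSet_singleton x)
    have he : (fun ω => if X j ω = x then (1:ℝ) else 0)
        = (X j ⁻¹' {x}).indicator (fun _ => (1:ℝ)) := by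
      funext ω; by_cases h : X j ω = x <;> simp [Set.indicator, Set.mem_preimage, h]
    rw [he, integral_indicator hs, setIntegral_const, smul_eq_mul, mul_one, measureReal_def, hXd j x]
  have hδint : ∀ j, Integrable (δ j) μ := fun j =>
    hbint _ 1 (hδm j) (fun ω => abs_le.mpr ⟨by linarith [(hδb j ω).1], (hδb j ω).2⟩)
  have hEδind : ∀ j x, ∫ ω, δ j ω * (if X j ω = x then (1:ℝ) else 0) ∂μ = π x * p x := by
    intro j x
    have hs : MeasurableSet (X j ⁻¹' {x}) := hXm j (measurableSet_singleton x)
    have hsm : MeasurableSet[MeasurableSpace.comap (X j) inferInstance] (X j ⁻¹' {x}) :=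
      ⟨{x}, measurableSet_singleton x, rfl⟩
    have he : (fun ω => δ j ω * (if X j ω = x then (1:ℝ) else 0))
        = (X j ⁻¹' {x}).indicator (δ j) := by
      funext ω; by_cases h : X j ω = x <;> simp [Set.indicator, Set.mem_preimage, h]
    calc ∫ ω, δ j ω * (if X j ω = x then (1:ℝ) else 0) ∂μ
        = ∫ ω in X j ⁻¹' {x}, δ j ω ∂μ := by rw [he, integral_indicator hs]
      _ = ∫ ω in X j ⁻¹' {x}, (μ[δ j | MeasurableSpace.comap (X j) inferInstance]) ω ∂μ :=
          (setIntegral_condExp ((hXm j).comap_le) (hδint j) hsm).symm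
      _ = ∫ ω in X j ⁻¹' {x}, π (X j ω) ∂μ :=
          integral_congr_ae (ae_restrict_of_ae (hprop j))
      _ = π x * p x := by
          rw [setIntegral_congr_fun hs (g := fun _ => π x)
            (fun ω hω => by rw [Set.mem_preimage, Set.mem_singleton_iff] at hω; rw [hω]),
            setIntegral_const, smul_eq_mul, measureReal_def, hXd j x, mul_comm]
  have hπ0 : ∀ x, 0 ≤ π x := fun x => hπmin.le.trans (hπ x)
  have hπ1 : ∀ x, π x ≤ 1 := by
    intro x
    have hmono : ∫ ω, δ 0 ω * (if X 0 ω = x then (1:ℝ) else 0) ∂μ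
        ≤ ∫ ω, (if X 0 ω = x then (1:ℝ) else 0) ∂μ := by
      apply integral_mono _ (hind_int 0 x) _
      · refine hbint _ 1 ((hδm 0).mul (hind_meas 0 x)) (fun ω => ?_)
        have h1 := (hδb 0 ω).1; have h2 := (hδb 0 ω).2
        by_cases h : X 0 ω = x
        · simp only [h, if_pos, mul_one]; exact abs_le.mpr ⟨by linarith, h2⟩
        · simp [h]
      · intro ω; by_cases h : X 0 ω = x <;> simp [h, (hδb 0 ω).2]
    rw [hEδind 0 x, hEind 0 x] at hmono
    exact le_of_mul_le_mul_right (by linarith) (hppos x)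
  have hp1 : ∀ x, p x ≤ 1 := fun x => by
    rw [hpdef]
    exact ENNReal.toReal_le_of_le_ofReal one_pos.le (by simpa using prob_le_one)
  -- the two families of centered variables
  set Z : α → ℕ → Ω → ℝ := fun x j ω => (δ j ω - π x) * (if X j ω = x then 1 else 0) with hZ
  set Wf : α → ℕ → Ω → ℝ := fun x j ω => (if X j ω = x then (1:ℝ) else 0) - p x with hWf
  have hZmeas : ∀ x j, Measurable (Z x j) := fun x j =>
    ((hδm j).sub measurable_const).mul (hind_meas j x)
  have hWmeas : ∀ x j, Measurable (Wf x j) := fun x j =>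
    (hind_meas j x).sub measurable_const
  have hZbdd : ∀ x j ω, |Z x j ω| ≤ 1 := by
    intro x j ω
    by_cases h : X j ω = x
    · simp only [hZ, h, if_pos, mul_one]
      exact abs_le.mpr ⟨by linarith [(hδb j ω).2, hπ0 x, hπ1 x, (hδb j ω).1],
        by linarith [(hδb j ω).2, hπ0 x]⟩
    · simp [hZ, h]
  have hWbdd : ∀ x j ω, |Wf x j ω| ≤ 1 := by
    intro x j ω
    have h1 := hp1 x; have h2 := (hppos x).le
    have he : Wf x j ω = (if X j ω = x then (1:ℝ) else 0) - p x := rfl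
    rw [he]
    by_cases h : X j ω = x
    · rw [if_pos h]; exact abs_le.mpr ⟨by linarith, by linarith⟩
    · rw [if_neg h]; exact abs_le.mpr ⟨by linarith, by linarith⟩
  have hZmean : ∀ x j, ∫ ω, Z x j ω ∂μ = 0 := by
    intro x j
    have he : Z x j = fun ω => δ j ω * (if X j ω = x then (1:ℝ) else 0)
        - π x * (if X j ω = x then (1:ℝ) else 0) := by
      funext ω
      show (δ j ω - π x) * (if X j ω = x then (1:ℝ) else 0) = _
      ring
    rw [he]
    beta_reduce
    rw [integral_sub (hbint (fun ω => δ j ω * (if X j ω = x then (1:ℝ) else 0)) 1 ((hδm j).mul (hind_meas j x)) (fun ω => by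
        by_cases h : X j ω = x <;> simp [h]
        · exact abs_le.mpr ⟨by linarith [(hδb j ω).1], (hδb j ω).2⟩))
      ((hind_int j x).const_mul _), hEδind j x, integral_const_mul, hEind j x]
    ring
  have hWmean : ∀ x j, ∫ ω, Wf x j ω ∂μ = 0 := by
    intro x j
    rw [hWf]
    simp only
    rw [integral_sub (hind_int j x) (integrable_const _), hEind j x, integral_const]
    simp
  have hZvar : ∀ x j, ∫ ω, (Z x j ω) ^ 2 ∂μ ≤ p x := by
    intro x j
    rw [← hEind j x]
    apply integral_mono _ (hind_int j x) _
    · exact hbint _ 1 ((hZmeas x j).pow_const 2) (fun ω => by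
        rw [abs_of_nonneg (sq_nonneg _)]
        nlinarith [hZbdd x j ω, abs_nonneg (Z x j ω), sq_abs (Z x j ω)])
    · intro ω
      by_cases h : X j ω = x
      · simp only [hZ, h, if_pos, mul_one]
        nlinarith [(hδb j ω).1, (hδb j ω).2, hπ0 x, hπ1 x]
      · simp [hZ, h]
  have hWvar : ∀ x j, ∫ ω, (Wf x j ω) ^ 2 ∂μ ≤ p x := by
    intro x j
    have he : (fun ω => (Wf x j ω) ^ 2)
        = fun ω => (1 - 2 * p x) * (if X j ω = x then (1:ℝ) else 0) + (p x) ^ 2 := by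
      funext ω; by_cases h : X j ω = x <;> simp [hWf, h] <;> ring
    rw [he, integral_add ((hind_int j x).const_mul _) (integrable_const _),
      integral_const_mul, hEind j x, integral_const]
    simp only [probReal_univ, measure_univ, ENNReal.toReal_one, smul_eq_mul, one_mul]
    nlinarith [sq_nonneg (p x), hppos x]
  have hZind : ∀ x j k, j ≠ k → IndepFun (Z x j) (Z x k) μ := by
    intro x j k hjk
    have hg : Measurable (fun q : ℝ × α × ℝ => (q.2.2 - π x) * (if q.2.1 = x then (1:ℝ) else 0)) :=
      (measurable_snd.snd.sub measurable_const).mul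
        (Measurable.ite (measurable_snd.fst (measurableSet_singleton x))
          measurable_const measurable_const)
    exact (hindep.indepFun hjk).comp hg hg
  have hWind : ∀ x j k, j ≠ k → IndepFun (Wf x j) (Wf x k) μ := by
    intro x j k hjk
    have hg : Measurable (fun q : ℝ × α × ℝ => (if q.2.1 = x then (1:ℝ) else 0) - p x) :=
      (Measurable.ite (measurable_snd.fst (measurableSet_singleton x))
        measurable_const measurable_const).sub measurable_const
    exact (hindep.indepFun hjk).comp hg hg
  refine ⟨∑ x : α, 8 * p x / pmin ^ 2, ?_⟩
  filter_upwards [eventually_ge_atTop 1] with n hn i hi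
  have hnpos : (0:ℝ) < n := by exact_mod_cast hn
  have hT2 : ∀ x, ∫ ω, (∑ j ∈ Finset.range n, Z x j ω) ^ 2 ∂μ ≤ n * p x := fun x =>
    aux_sum_sq μ n (Z x) (p x) (hZmeas x) (hZbdd x) (hZmean x) (hZvar x) (hZind x)
  have hW2 : ∀ x, ∫ ω, (∑ j ∈ Finset.range n, Wf x j ω) ^ 2 ∂μ ≤ n * p x := fun x =>
    aux_sum_sq μ n (Wf x) (p x) (hWmeas x) (hWbdd x) (hWmean x) (hWvar x) (hWind x)
  -- integrability of the squares of the sums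
  have hsumsq_int : ∀ (G : ℕ → Ω → ℝ), (∀ j, Measurable (G j)) → (∀ j ω, |G j ω| ≤ 1) →
      Integrable (fun ω => (∑ j ∈ Finset.range n, G j ω) ^ 2) μ := by
    intro G hGm hGb
    apply hbint _ ((n : ℝ) ^ 2)
      ((Finset.measurable_sum _ (fun j _ => hGm j)).pow_const 2)
    intro ω
    rw [abs_of_nonneg (sq_nonneg _)]
    have h1 : |∑ j ∈ Finset.range n, G j ω| ≤ n := by
      calc |∑ j ∈ Finset.range n, G j ω| ≤ ∑ j ∈ Finset.range n, |G j ω| :=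
            Finset.abs_sum_le_sum_abs _ _
        _ ≤ ∑ _j ∈ Finset.range n, (1:ℝ) := Finset.sum_le_sum fun j _ => hGb j ω
        _ = n := by simp
    calc (∑ j ∈ Finset.range n, G j ω) ^ 2 = |∑ j ∈ Finset.range n, G j ω| ^ 2 := (sq_abs _).symm
      _ ≤ (n:ℝ) ^ 2 := by nlinarith [abs_nonneg (∑ j ∈ Finset.range n, G j ω)]
  have hint_x : ∀ x : α, Integrable (fun ω => (∑ j ∈ Finset.range n, Z x j ω) ^ 2
      + (∑ j ∈ Finset.range n, Wf x j ω) ^ 2) μ := fun x =>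
    (hsumsq_int (Z x) (hZmeas x) (hZbdd x)).add (hsumsq_int (Wf x) (hWmeas x) (hWbdd x))
  have hRHSint : Integrable (fun ω => (2 / ((n:ℝ) * pmin)) ^ 2 *
      ∑ x : α, ((∑ j ∈ Finset.range n, Z x j ω) ^ 2
        + (∑ j ∈ Finset.range n, Wf x j ω) ^ 2)) μ :=
    (integrable_finset_sum _ fun x _ => hint_x x).const_mul _
  have hpt : ∀ ω, (piHat X δ n i ω - π (X i ω)) ^ 2 ≤ (2 / ((n:ℝ) * pmin)) ^ 2 *
      ∑ x : α, ((∑ j ∈ Finset.range n, Z x j ω) ^ 2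
        + (∑ j ∈ Finset.range n, Wf x j ω) ^ 2) := by
    intro ω
    have h := aux_pointwise n hn i hi (fun j => δ j ω) (fun j => X j ω) π p pmin hpmin
      hπ0 hπ1 (fun j => hδb j ω) hp
    simpa [piHat, hZ, hWf] using h
  calc ∫ ω, (piHat X δ n i ω - π (X i ω)) ^ 2 ∂μ
      ≤ ∫ ω, (2 / ((n:ℝ) * pmin)) ^ 2 *
          ∑ x : α, ((∑ j ∈ Finset.range n, Z x j ω) ^ 2
            + (∑ j ∈ Finset.range n, Wf x j ω) ^ 2) ∂μ :=
        integral_mono_of_nonneg (ae_of_all _ fun ω => sq_nonneg _) hRHSint (ae_of_all _ hpt)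
    _ = (2 / ((n:ℝ) * pmin)) ^ 2 * ∑ x : α,
          ((∫ ω, (∑ j ∈ Finset.range n, Z x j ω) ^ 2 ∂μ)
            + ∫ ω, (∑ j ∈ Finset.range n, Wf x j ω) ^ 2 ∂μ) := by
        rw [integral_const_mul, integral_finset_sum _ fun x _ => hint_x x]
        congr 1
        exact Finset.sum_congr rfl fun x _ => integral_add
          (hsumsq_int (Z x) (hZmeas x) (hZbdd x)) (hsumsq_int (Wf x) (hWmeas x) (hWbdd x))
    _ ≤ (2 / ((n:ℝ) * pmin)) ^ 2 * ∑ x : α, ((n:ℝ) * p x + (n:ℝ) * p x) :=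
        mul_le_mul_of_nonneg_left
          (Finset.sum_le_sum fun x _ => add_le_add (hT2 x) (hW2 x)) (by positivity)
    _ = (∑ x : α, 8 * p x / pmin ^ 2) * (n:ℝ)⁻¹ := by
        rw [Finset.mul_sum, Finset.sum_mul]
        refine Finset.sum_congr rfl fun x _ => ?_
        field_simp
        ring
end
end

section
/- Under the MAR setup, for every y ∈ [0,1] and m ∈ ℕ, the covariance between the Bernstein-smoothed pseudo estimator A_{n,m} = F̃_{n,m}(y) and the correction term B_{n,m} equals the variance of B_{n,m}: Cov(A_{n,m}, B_{n,m}) = Var(B_{n,m}) = n⁻¹ E[ ((1 − π(X₁))/π(X₁)) (Σ_{k=0}^m F_{Y₁|X₁}(k/m) b_{m,k}(y))² ]. Consequently, Var(A_{n,m} − B_{n,m}) = Var(F̃_{n,m}(y)) − n⁻¹ E[ ((1 − π(X₁))/π(X₁)) (Σ_{k=0}^m F_{Y₁|X₁}(k/m) b_{m,k}(y))² ]. -/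
open MeasureTheory ProbabilityTheory Filter Asymptotics

noncomputable section

/-- The propensity-correction term
`B_{n,m} = n⁻¹ ∑_i ((δ_i − π(X_i))/π(X_i)) ∑_k F_{Y_i|X_i}(k/m) b_{m,k}(y)`. -/
def corrB {Ω α : Type*} (X : ℕ → Ω → α) (δ : ℕ → Ω → ℝ) (π : α → ℝ)
    (Fc : α → ℝ → ℝ) (n m : ℕ) (y : ℝ) (ω : Ω) : ℝ :=
  (n : ℝ)⁻¹ * ∑ i ∈ Finset.range n,
    (δ i ω - π (X i ω)) / π (X i ω) *
      ∑ k ∈ Finset.range (m + 1), Fc (X i ω) ((k : ℝ) / (m : ℝ)) * bern m k y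

/-- Covariance of two real random variables. -/
def cov {Ω : Type*} [MeasurableSpace Ω] (f g : Ω → ℝ) (μ : Measure Ω) : ℝ :=
  ∫ ω, (f ω - ∫ ω', f ω' ∂μ) * (g ω - ∫ ω', g ω' ∂μ) ∂μ

section Aux

variable {Ω : Type*} [MeasurableSpace Ω] {μ : Measure Ω}

lemma aux_mem2 [IsFiniteMeasure μ] {f : Ω → ℝ} (hf : Measurable f)
    {K : ℝ} (h : ∀ᵐ ω ∂μ, |f ω| ≤ K) : MemLp f 2 μ :=
  MemLp.of_bound hf.aestronglyMeasurable K (by simpa [Real.norm_eq_abs] using h)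

lemma aux_int [IsFiniteMeasure μ] {f : Ω → ℝ} (hf : Measurable f)
    {K : ℝ} (h : ∀ᵐ ω ∂μ, |f ω| ≤ K) : Integrable f μ :=
  (aux_mem2 hf h).integrable one_le_two

lemma cov_expand [IsProbabilityMeasure μ] (f g : Ω → ℝ) (hf : Integrable f μ)
    (hg : Integrable g μ) (hfg : Integrable (fun ω => f ω * g ω) μ) :
    cov f g μ = (∫ ω, f ω * g ω ∂μ) - (∫ ω, f ω ∂μ) * ∫ ω, g ω ∂μ := by
  unfold cov
  have h1 : ∀ ω, (f ω - ∫ ω', f ω' ∂μ) * (g ω - ∫ ω', g ω' ∂μ)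
      = f ω * g ω - ((∫ ω', f ω' ∂μ) * g ω + ((∫ ω', g ω' ∂μ) * f ω
          - (∫ ω', f ω' ∂μ) * (∫ ω', g ω' ∂μ))) := by intro ω; ring
  simp_rw [h1]
  have i3 : Integrable (fun ω => (∫ ω', g ω' ∂μ) * f ω - (∫ ω', f ω' ∂μ) * ∫ ω', g ω' ∂μ) μ := by
    exact (hf.const_mul _).sub (integrable_const _)
  have i2 : Integrable (fun ω => (∫ ω', f ω' ∂μ) * g ω
      + ((∫ ω', g ω' ∂μ) * f ω - (∫ ω', f ω' ∂μ) * ∫ ω', g ω' ∂μ)) μ := by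
    exact (hg.const_mul _).add i3
  rw [integral_sub hfg i2, integral_add (hg.const_mul _) i3,
    integral_sub (hf.const_mul _) (integrable_const _),
    integral_const_mul, integral_const_mul, integral_const]
  simp
  ring

/-- Pull-out: integrating against a σ(X)-measurable factor replaces `f` by `μ[f|σ(X)]`. -/
lemma aux_pull {α : Type*} [MeasurableSpace α] [MeasurableSingletonClass α] [Countable α]
    [IsFiniteMeasure μ] {X : Ω → α} (hX : Measurable X)
    {f : Ω → ℝ} (hfint : Integrable f μ) (h : α → ℝ)
    (hfh : Integrable (fun ω => f ω * h (X ω)) μ) :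
    ∫ ω, f ω * h (X ω) ∂μ
      = ∫ ω, (μ[f | MeasurableSpace.comap X inferInstance]) ω * h (X ω) ∂μ := by
  set m₀ : MeasurableSpace Ω := MeasurableSpace.comap X inferInstance with hm₀def
  have hm₀ : m₀ ≤ _ := hX.comap_le
  have hHsm : StronglyMeasurable[m₀] (fun ω => h (X ω)) :=
    ((measurable_of_countable h).comp (comap_measurable X)).stronglyMeasurable
  have hint2 : Integrable ((fun ω => h (X ω)) * f) μ := by
    convert hfh using 1
    funext ω; simp only [Pi.mul_apply]; ring
  have e1 : ∫ ω, f ω * h (X ω) ∂μ = ∫ ω, ((fun ω => h (X ω)) * f) ω ∂μ := by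
    simp [mul_comm]
  rw [e1, ← integral_condExp hm₀,
    integral_congr_ae (condExp_mul_of_stronglyMeasurable_left hHsm hint2 hfint)]
  simp [mul_comm]

end Aux

section Aux2

variable {Ω : Type*} [MeasurableSpace Ω] [StandardBorelSpace Ω] {μ : Measure Ω}
  {α : Type*} [MeasurableSpace α] [MeasurableSingletonClass α] [Countable α]
  {X : Ω → α} {Y : Ω → ℝ} {δ : Ω → ℝ}

lemma ind_meas (hYm : Measurable Y) (t : ℝ) : Measurable (fun ω => ind (Y ω) t) := by
  unfold ind
  exact Measurable.ite (hYm measurableSet_Iic) measurable_const measurable_const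

lemma ind_bd (u t : ℝ) : ind u t ∈ Set.Icc (0:ℝ) 1 := by
  unfold ind; split_ifs <;> constructor <;> norm_num

/-- Key conditional expectation identity from MAR:
`E[δ · 𝟙{Y ≤ t} | σ(X)] = π(X) F_c(X,t)`. -/
lemma aux_condexp_mul [IsFiniteMeasure μ]
    (hXm : Measurable X) (hYm : Measurable Y) (hδm : Measurable δ)
    (hδ01 : ∀ ω, δ ω = 0 ∨ δ ω = 1) (π : α → ℝ) (Fc : α → ℝ → ℝ)
    (hprop : μ[δ | MeasurableSpace.comap X inferInstance] =ᵐ[μ] fun ω => π (X ω))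
    (hMAR : CondIndepFun (MeasurableSpace.comap X inferInstance) hXm.comap_le δ Y μ)
    (t : ℝ)
    (hFc : μ[fun ω => ind (Y ω) t | MeasurableSpace.comap X inferInstance]
      =ᵐ[μ] fun ω => Fc (X ω) t) :
    μ[fun ω => δ ω * ind (Y ω) t | MeasurableSpace.comap X inferInstance]
      =ᵐ[μ] fun ω => π (X ω) * Fc (X ω) t := by
  set m₀ : MeasurableSpace Ω := MeasurableSpace.comap X inferInstance with hm₀def
  have hci := (condIndepFun_iff_condExp_inter_preimage_eq_mul hδm hYm).mp hMAR
    {1} (Set.Iic t) (measurableSet_singleton 1) measurableSet_Iic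
  have e1 : (fun ω => δ ω * ind (Y ω) t)
      = (δ ⁻¹' {1} ∩ Y ⁻¹' Set.Iic t).indicator (fun _ => (1:ℝ)) := by
    funext ω
    rcases hδ01 ω with h0 | h0 <;> by_cases h2 : Y ω ≤ t <;>
      simp [ind, Set.indicator_apply, h0, h2, Set.mem_Iic]
  have e2 : δ = (δ ⁻¹' {1}).indicator (fun _ => (1:ℝ)) := by
    funext ω
    rcases hδ01 ω with h0 | h0 <;> simp [Set.indicator_apply, h0]
  have e3 : (fun ω => ind (Y ω) t) = (Y ⁻¹' Set.Iic t).indicator (fun _ => (1:ℝ)) := by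
    funext ω
    by_cases h2 : Y ω ≤ t <;> simp [ind, Set.indicator_apply, h2, Set.mem_Iic]
  rw [e1]
  refine hci.trans ?_
  have hδ' : (μ⟦δ ⁻¹' {1} | m₀⟧) =ᵐ[μ] fun ω => π (X ω) := by
    refine Filter.EventuallyEq.trans ?_ hprop
    exact condExp_congr_ae (Filter.EventuallyEq.of_eq e2.symm)
  have hY' : (μ⟦Y ⁻¹' Set.Iic t | m₀⟧) =ᵐ[μ] fun ω => Fc (X ω) t := by
    refine Filter.EventuallyEq.trans ?_ hFc
    exact condExp_congr_ae (Filter.EventuallyEq.of_eq e3.symm)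
  filter_upwards [hδ', hY'] with ω h1 h2
  rw [h1, h2]

/-- `E[δ · 𝟙{Y ≤ t} · h(X)] = E[π(X) F_c(X,t) h(X)]`. -/
lemma aux_key2 [IsProbabilityMeasure μ]
    (hXm : Measurable X) (hYm : Measurable Y) (hδm : Measurable δ)
    (hδ01 : ∀ ω, δ ω = 0 ∨ δ ω = 1) (π : α → ℝ) (Fc : α → ℝ → ℝ)
    (hprop : μ[δ | MeasurableSpace.comap X inferInstance] =ᵐ[μ] fun ω => π (X ω))
    (hMAR : CondIndepFun (MeasurableSpace.comap X inferInstance) hXm.comap_le δ Y μ)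
    (t : ℝ)
    (hFc : μ[fun ω => ind (Y ω) t | MeasurableSpace.comap X inferInstance]
      =ᵐ[μ] fun ω => Fc (X ω) t)
    (h : α → ℝ) (K : ℝ) (hbd : ∀ᵐ ω ∂μ, |h (X ω)| ≤ K) :
    ∫ ω, δ ω * ind (Y ω) t * h (X ω) ∂μ = ∫ ω, π (X ω) * Fc (X ω) t * h (X ω) ∂μ := by
  have hfm : Measurable (fun ω => δ ω * ind (Y ω) t) := hδm.mul (ind_meas hYm t)
  have hfbd : ∀ ω, |δ ω * ind (Y ω) t| ≤ 1 := by
    intro ω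
    rw [abs_mul]
    have h1 : |δ ω| ≤ 1 := by rcases hδ01 ω with h0 | h0 <;> simp [h0]
    have h2 : |ind (Y ω) t| ≤ 1 := by
      rw [abs_le]; have := ind_bd (Y ω) t; exact ⟨by linarith [this.1], this.2⟩
    calc |δ ω| * |ind (Y ω) t| ≤ 1 * 1 :=
      mul_le_mul h1 h2 (abs_nonneg _) zero_le_one
    _ = 1 := one_mul 1
  have hfint : Integrable (fun ω => δ ω * ind (Y ω) t) μ := aux_int hfm (ae_of_all _ hfbd)
  have hHm : Measurable (fun ω => h (X ω)) := (measurable_of_countable h).comp hXm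
  have hfh : Integrable (fun ω => δ ω * ind (Y ω) t * h (X ω)) μ := by
    refine aux_int (K := 1 * K) (hfm.mul hHm) ?_
    filter_upwards [hbd] with ω hω
    rw [abs_mul]
    calc |δ ω * ind (Y ω) t| * |h (X ω)| ≤ 1 * K :=
      mul_le_mul (hfbd ω) hω (abs_nonneg _) zero_le_one
    _ = 1 * K := rfl
  rw [aux_pull hXm hfint h hfh]
  refine integral_congr_ae ?_
  filter_upwards [aux_condexp_mul hXm hYm hδm hδ01 π Fc hprop hMAR t hFc] with ω hω
  rw [hω]

/-- `E[δ · h(X)] = E[π(X) h(X)]`. -/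
lemma aux_key1 [IsProbabilityMeasure μ]
    (hXm : Measurable X) (hδm : Measurable δ)
    (hδ01 : ∀ ω, δ ω = 0 ∨ δ ω = 1) (π : α → ℝ)
    (hprop : μ[δ | MeasurableSpace.comap X inferInstance] =ᵐ[μ] fun ω => π (X ω))
    (h : α → ℝ) (K : ℝ) (hbd : ∀ᵐ ω ∂μ, |h (X ω)| ≤ K) :
    ∫ ω, δ ω * h (X ω) ∂μ = ∫ ω, π (X ω) * h (X ω) ∂μ := by
  have hδbd : ∀ ω, |δ ω| ≤ 1 := by
    intro ω; rcases hδ01 ω with h0 | h0 <;> simp [h0]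
  have hδint : Integrable δ μ := aux_int hδm (ae_of_all _ hδbd)
  have hHm : Measurable (fun ω => h (X ω)) := (measurable_of_countable h).comp hXm
  have hfh : Integrable (fun ω => δ ω * h (X ω)) μ := by
    refine aux_int (K := 1 * K) (hδm.mul hHm) ?_
    filter_upwards [hbd] with ω hω
    rw [abs_mul]
    exact mul_le_mul (hδbd ω) hω (abs_nonneg _) zero_le_one
  rw [aux_pull hXm hδint h hfh]
  refine integral_congr_ae ?_
  filter_upwards [hprop] with ω hω
  rw [hω]

end Aux2

set_option maxHeartbeats 2000000 in
/-- Under the MAR setup, `Cov(A_{n,m}, B_{n,m}) = Var(B_{n,m})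
  = n⁻¹ E[((1−π(X₁))/π(X₁)) (∑_k F_{Y₁|X₁}(k/m) b_{m,k}(y))²]`, and consequently
`Var(A_{n,m} − B_{n,m}) = Var(F̃_{n,m}(y)) − n⁻¹ E[((1−π(X₁))/π(X₁)) (∑_k F_{Y₁|X₁}(k/m) b_{m,k}(y))²]`. -/
theorem covariance_correction_term
    {Ω : Type*} [MeasurableSpace Ω] [StandardBorelSpace Ω]
    {α : Type*} [MeasurableSpace α] [MeasurableSingletonClass α] [Countable α]
    (μ : Measure Ω) [IsProbabilityMeasure μ]
    (Y : ℕ → Ω → ℝ) (X : ℕ → Ω → α) (δ : ℕ → Ω → ℝ)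
    (hYm : ∀ i, Measurable (Y i)) (hXm : ∀ i, Measurable (X i)) (hδm : ∀ i, Measurable (δ i))
    (hY01 : ∀ i ω, Y i ω ∈ Set.Icc (0 : ℝ) 1)
    (hδ01 : ∀ i ω, δ i ω = 0 ∨ δ i ω = 1)
    -- the triples (Y_i, X_i, δ_i) are i.i.d.
    (hiid : ∀ i j, IdentDistrib (fun ω => (Y i ω, X i ω, δ i ω))
      (fun ω => (Y j ω, X j ω, δ j ω)) μ μ)
    (hindep : iIndepFun (fun i ω => (Y i ω, X i ω, δ i ω)) μ)
    -- Assumption (A1): the propensity score is bounded below by πmin > 0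
    (π : α → ℝ) (πmin : ℝ) (hπmin : 0 < πmin) (hπ : ∀ x, πmin ≤ π x)
    -- π(X_i) = P(δ_i = 1 | X_i)
    (hprop : ∀ i, μ[δ i | MeasurableSpace.comap (X i) inferInstance]
      =ᵐ[μ] fun ω => π (X i ω))
    -- MAR: δ_i is independent of Y_i conditionally on X_i
    (hMAR : ∀ i, CondIndepFun (MeasurableSpace.comap (X i) inferInstance)
      ((hXm i).comap_le) (δ i) (Y i) μ)
    -- F is the CDF of the Y_i
    (F : ℝ → ℝ) (hF : ∀ t, F t = (μ {ω | Y 0 ω ≤ t}).toReal)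
    -- F_{Y₁|X₁}: the conditional CDF of Y_i given X_i
    (Fc : α → ℝ → ℝ)
    (hFc : ∀ i t, μ[fun ω => ind (Y i ω) t | MeasurableSpace.comap (X i) inferInstance]
      =ᵐ[μ] fun ω => Fc (X i ω) t)
    (n : ℕ) (hn : 0 < n) (m : ℕ) (y : ℝ) (hy : y ∈ Set.Icc (0 : ℝ) 1) :
    cov (tildeFnm Y X δ π n m y) (corrB X δ π Fc n m y) μ
        = variance (corrB X δ π Fc n m y) μ ∧
    variance (corrB X δ π Fc n m y) μ
        = (n : ℝ)⁻¹ * ∫ ω, (1 - π (X 0 ω)) / π (X 0 ω) *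
            (∑ k ∈ Finset.range (m + 1), Fc (X 0 ω) ((k : ℝ) / (m : ℝ)) * bern m k y) ^ 2 ∂μ ∧
    variance (fun ω => tildeFnm Y X δ π n m y ω - corrB X δ π Fc n m y ω) μ
        = variance (tildeFnm Y X δ π n m y) μ
          - (n : ℝ)⁻¹ * ∫ ω, (1 - π (X 0 ω)) / π (X 0 ω) *
              (∑ k ∈ Finset.range (m + 1), Fc (X 0 ω) ((k : ℝ) / (m : ℝ)) * bern m k y) ^ 2 ∂μ := by
  classical
  obtain ⟨hy0, hy1⟩ := hy
  have hπpos : ∀ x, 0 < π x := fun x => lt_of_lt_of_le hπmin (hπ x)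
  have hπne : ∀ x, π x ≠ 0 := fun x => ne_of_gt (hπpos x)
  have hn' : (n : ℝ) ≠ 0 := Nat.cast_ne_zero.mpr hn.ne'
  set SF : α → ℝ := fun x => ∑ k ∈ Finset.range (m+1), Fc x ((k:ℝ)/(m:ℝ)) * bern m k y
    with hSF
  set aR : ℕ → Ω → ℝ := fun i ω => δ i ω / π (X i ω) *
    ∑ k ∈ Finset.range (m+1), ind (Y i ω) ((k:ℝ)/(m:ℝ)) * bern m k y with haR
  set bR : ℕ → Ω → ℝ := fun i ω => (δ i ω - π (X i ω)) / π (X i ω) * SF (X i ω) with hbR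
  set G : α → ℝ := fun x => (1 - π x) / π x * SF x ^ 2 with hG
  set V : ℝ := ∫ ω, G (X 0 ω) ∂μ with hV
  set C : ℝ := ∑ k ∈ Finset.range (m+1), bern m k y with hC
  -- basic facts about the Bernstein weights
  have hbern0 : ∀ k, 0 ≤ bern m k y := by
    intro k
    have h1 : (0:ℝ) ≤ 1 - y := by linarith
    unfold bern
    positivity
  have hC0 : 0 ≤ C := Finset.sum_nonneg fun k _ => hbern0 k
  -- rewriting the two estimators as normalized sums
  have hA : tildeFnm Y X δ π n m y = fun ω => (n:ℝ)⁻¹ * ∑ i ∈ Finset.range n, aR i ω := by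
    funext ω
    simp only [tildeFnm, bsmooth, tildeF, haR]
    simp only [Finset.sum_mul, Finset.mul_sum]
    rw [Finset.sum_comm]
    exact Finset.sum_congr rfl fun i _ => Finset.sum_congr rfl fun k _ => by ring
  have hB : corrB X δ π Fc n m y = fun ω => (n:ℝ)⁻¹ * ∑ i ∈ Finset.range n, bR i ω := by
    funext ω
    simp only [corrB, hbR, hSF]
  -- measurability
  have hSFXm : ∀ (i : ℕ) (h : α → ℝ), Measurable (fun ω => h (X i ω)) := fun i h =>
    (measurable_of_countable h).comp (hXm i)
  have haRm : ∀ i, Measurable (aR i) := by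
    intro i
    apply Measurable.mul
    · exact (hδm i).div (hSFXm i π)
    · exact Finset.measurable_sum _ fun k _ => (ind_meas (hYm i) _).mul measurable_const
  have hbRm : ∀ i, Measurable (bR i) := by
    intro i
    exact (((hδm i).sub (hSFXm i π)).div (hSFXm i π)).mul (hSFXm i SF)
  -- pointwise bounds
  have hδbd : ∀ i ω, |δ i ω| ≤ 1 := by
    intro i ω; rcases hδ01 i ω with h0 | h0 <;> simp [h0]
  have hind1 : ∀ (u t : ℝ), |ind u t| ≤ 1 := by
    intro u t
    have h := ind_bd u t
    rw [abs_le]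
    exact ⟨by linarith [h.1], h.2⟩
  have hIbd : ∀ i ω, |∑ k ∈ Finset.range (m+1), ind (Y i ω) ((k:ℝ)/(m:ℝ)) * bern m k y| ≤ C := by
    intro i ω
    rw [hC]
    calc |∑ k ∈ Finset.range (m+1), ind (Y i ω) ((k:ℝ)/(m:ℝ)) * bern m k y|
        ≤ ∑ k ∈ Finset.range (m+1), |ind (Y i ω) ((k:ℝ)/(m:ℝ)) * bern m k y| :=
          Finset.abs_sum_le_sum_abs _ _
      _ ≤ ∑ k ∈ Finset.range (m+1), bern m k y := by
          refine Finset.sum_le_sum fun k _ => ?_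
          rw [abs_mul, abs_of_nonneg (hbern0 k)]
          calc |ind (Y i ω) ((k:ℝ)/(m:ℝ))| * bern m k y ≤ 1 * bern m k y :=
              mul_le_mul_of_nonneg_right (hind1 _ _) (hbern0 k)
            _ = bern m k y := one_mul _
  have hdivbd : ∀ (u : ℝ) (x : α), |u| ≤ 1 → |u / π x| ≤ πmin⁻¹ := by
    intro u x hu
    rw [abs_div, abs_of_pos (hπpos x)]
    calc |u| / π x ≤ 1 / πmin := div_le_div₀ zero_le_one hu hπmin (hπ x)
      _ = πmin⁻¹ := one_div _
  have haRbd : ∀ i ω, |aR i ω| ≤ πmin⁻¹ * C := by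
    intro i ω
    simp only [haR]
    rw [abs_mul]
    exact mul_le_mul (hdivbd _ _ (hδbd i ω)) (hIbd i ω) (abs_nonneg _)
      (by positivity)
  -- a.e. bounds
  have hπ1 : ∀ i, ∀ᵐ ω ∂μ, π (X i ω) ≤ 1 := by
    intro i
    have hδint : Integrable (δ i) μ := aux_int (hδm i) (ae_of_all _ (hδbd i))
    have h1 : μ[δ i | MeasurableSpace.comap (X i) inferInstance] ≤ᵐ[μ]
        μ[(fun _ => (1:ℝ)) | MeasurableSpace.comap (X i) inferInstance] :=
      condExp_mono hδint (integrable_const 1)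
        (ae_of_all _ fun ω => by rcases hδ01 i ω with h0 | h0 <;> simp [h0])
    rw [condExp_const ((hXm i).comap_le)] at h1
    filter_upwards [h1, hprop i] with ω ha hb
    rw [← hb]
    exact ha
  have hFc01 : ∀ (i : ℕ) (t : ℝ), ∀ᵐ ω ∂μ, 0 ≤ Fc (X i ω) t ∧ Fc (X i ω) t ≤ 1 := by
    intro i t
    have hindint : Integrable (fun ω => ind (Y i ω) t) μ :=
      aux_int (ind_meas (hYm i) t) (ae_of_all _ fun ω => hind1 _ _)
    have h0 : (0:Ω → ℝ) ≤ᵐ[μ] μ[fun ω => ind (Y i ω) t | MeasurableSpace.comap (X i) inferInstance] :=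
      condExp_nonneg (ae_of_all _ fun ω => (ind_bd (Y i ω) t).1)
    have h1 : μ[fun ω => ind (Y i ω) t | MeasurableSpace.comap (X i) inferInstance] ≤ᵐ[μ]
        μ[(fun _ => (1:ℝ)) | MeasurableSpace.comap (X i) inferInstance] :=
      condExp_mono hindint (integrable_const 1) (ae_of_all _ fun ω => (ind_bd (Y i ω) t).2)
    rw [condExp_const ((hXm i).comap_le)] at h1
    filter_upwards [h0, h1, hFc i t] with ω ha hb hc
    rw [← hc]
    exact ⟨ha, hb⟩
  have hSFbd : ∀ i, ∀ᵐ ω ∂μ, |SF (X i ω)| ≤ C := by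
    intro i
    have h := ae_all_iff.2 (fun k : ℕ => hFc01 i ((k:ℝ)/(m:ℝ)))
    filter_upwards [h] with ω hω
    simp only [hSF]
    rw [hC]
    calc |∑ k ∈ Finset.range (m+1), Fc (X i ω) ((k:ℝ)/(m:ℝ)) * bern m k y|
        ≤ ∑ k ∈ Finset.range (m+1), |Fc (X i ω) ((k:ℝ)/(m:ℝ)) * bern m k y| :=
          Finset.abs_sum_le_sum_abs _ _
      _ ≤ ∑ k ∈ Finset.range (m+1), bern m k y := by
          refine Finset.sum_le_sum fun k _ => ?_
          rw [abs_mul, abs_of_nonneg (hbern0 k)]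
          have h2 : |Fc (X i ω) ((k:ℝ)/(m:ℝ))| ≤ 1 :=
            abs_le.2 ⟨by linarith [(hω k).1], (hω k).2⟩
          calc |Fc (X i ω) ((k:ℝ)/(m:ℝ))| * bern m k y ≤ 1 * bern m k y :=
              mul_le_mul_of_nonneg_right h2 (hbern0 k)
            _ = bern m k y := one_mul _
  have hbRbd : ∀ i, ∀ᵐ ω ∂μ, |bR i ω| ≤ πmin⁻¹ * 2 * C := by
    intro i
    filter_upwards [hπ1 i, hSFbd i] with ω h1 h2
    simp only [hbR]
    rw [abs_mul]
    have hd : |(δ i ω - π (X i ω)) / π (X i ω)| ≤ πmin⁻¹ * 2 := by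
      rw [abs_div, abs_of_pos (hπpos _)]
      have hnum : |δ i ω - π (X i ω)| ≤ 2 := by
        have h3 := hδbd i ω
        have h4 : 0 < π (X i ω) := hπpos _
        rw [abs_le] at h3 ⊢
        constructor <;> [linarith [h3.1]; linarith [h3.2]]
      calc |δ i ω - π (X i ω)| / π (X i ω) ≤ 2 / πmin :=
          div_le_div₀ (by norm_num) hnum hπmin (hπ _)
        _ = πmin⁻¹ * 2 := by rw [div_eq_mul_inv]; ring
    calc |(δ i ω - π (X i ω)) / π (X i ω)| * |SF (X i ω)| ≤ (πmin⁻¹ * 2) * C :=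
        mul_le_mul hd h2 (abs_nonneg _) (by positivity)
      _ = πmin⁻¹ * 2 * C := rfl
  -- integrability
  have haRint : ∀ i, Integrable (aR i) μ := fun i =>
    aux_int (haRm i) (ae_of_all _ (haRbd i))
  have hbRint : ∀ i, Integrable (bR i) μ := fun i => aux_int (hbRm i) (hbRbd i)
  have habint : ∀ i j, Integrable (fun ω => aR i ω * bR j ω) μ := by
    intro i j
    refine aux_int ((haRm i).mul (hbRm j)) (K := (πmin⁻¹ * C) * (πmin⁻¹ * 2 * C)) ?_
    filter_upwards [hbRbd j] with ω hω
    rw [abs_mul]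
    exact mul_le_mul (haRbd i ω) hω (abs_nonneg _) (by positivity)
  have hbbint : ∀ i j, Integrable (fun ω => bR i ω * bR j ω) μ := by
    intro i j
    refine aux_int ((hbRm i).mul (hbRm j)) (K := (πmin⁻¹ * 2 * C) * (πmin⁻¹ * 2 * C)) ?_
    filter_upwards [hbRbd i, hbRbd j] with ω h1 h2
    rw [abs_mul]
    exact mul_le_mul h1 h2 (abs_nonneg _) (by positivity)
  -- identical distribution of the X i
  have hGid : ∀ (i : ℕ) (g : α → ℝ), ∫ ω, g (X i ω) ∂μ = ∫ ω, g (X 0 ω) ∂μ := by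
    intro i g
    have hXid : IdentDistrib (X i) (X 0) μ μ :=
      (hiid i 0).comp (measurable_fst.comp measurable_snd)
    exact (hXid.comp (measurable_of_countable g)).integral_eq
  -- first moments
  have hEb : ∀ i, ∫ ω, bR i ω ∂μ = 0 := by
    intro i
    have hpi : ∀ᵐ ω ∂μ, |SF (X i ω) / π (X i ω)| ≤ πmin⁻¹ * C := by
      filter_upwards [hSFbd i] with ω h1
      rw [abs_div, abs_of_pos (hπpos _)]
      calc |SF (X i ω)| / π (X i ω) ≤ C / πmin := div_le_div₀ hC0 h1 hπmin (hπ _)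
        _ = πmin⁻¹ * C := by rw [div_eq_mul_inv]; ring
    have hint1 : Integrable (fun ω => δ i ω * (SF (X i ω) / π (X i ω))) μ := by
      refine aux_int ((hδm i).mul (hSFXm i (fun x => SF x / π x))) (K := 1 * (πmin⁻¹ * C)) ?_
      filter_upwards [hpi] with ω h1
      rw [abs_mul]
      exact mul_le_mul (hδbd i ω) h1 (abs_nonneg _) zero_le_one
    have hint2 : Integrable (fun ω => SF (X i ω)) μ := aux_int (hSFXm i SF) (hSFbd i)
    have hptw : (fun ω => bR i ω) = fun ω => δ i ω * (SF (X i ω) / π (X i ω)) - SF (X i ω) := by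
      funext ω
      simp only [hbR]
      field_simp [hπne (X i ω)]
      try ring
    rw [hptw, integral_sub hint1 hint2, sub_eq_zero]
    calc ∫ ω, δ i ω * (SF (X i ω) / π (X i ω)) ∂μ
        = ∫ ω, π (X i ω) * (SF (X i ω) / π (X i ω)) ∂μ :=
          aux_key1 (hXm i) (hδm i) (hδ01 i) π (hprop i) (fun x => SF x / π x) (πmin⁻¹ * C) hpi
      _ = ∫ ω, SF (X i ω) ∂μ := by
          refine integral_congr_ae (ae_of_all _ fun ω => ?_)
          dsimp only
          exact mul_div_cancel₀ _ (hπne _)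
  have hgbd : ∀ i, ∀ᵐ ω ∂μ, |(1 - π (X i ω)) / (π (X i ω))^2 * SF (X i ω)| ≤ πmin⁻¹ * πmin⁻¹ * C := by
    intro i
    filter_upwards [hπ1 i, hSFbd i] with ω h1 h2
    rw [abs_mul]
    have e1 : |(1 - π (X i ω)) / (π (X i ω))^2| ≤ πmin⁻¹ * πmin⁻¹ := by
      rw [abs_div, abs_of_pos (pow_pos (hπpos _) 2)]
      have hnum : |1 - π (X i ω)| ≤ 1 := by
        rw [abs_le]
        have := hπpos (X i ω)
        constructor <;> [linarith; linarith]
      calc |1 - π (X i ω)| / (π (X i ω))^2 ≤ 1 / πmin^2 :=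
          div_le_div₀ zero_le_one hnum (by positivity)
            (pow_le_pow_left₀ hπmin.le (hπ _) 2)
        _ = πmin⁻¹ * πmin⁻¹ := by rw [one_div, pow_two, mul_inv]
    calc |(1 - π (X i ω)) / (π (X i ω))^2| * |SF (X i ω)| ≤ (πmin⁻¹ * πmin⁻¹) * C :=
        mul_le_mul e1 h2 (abs_nonneg _) (by positivity)
      _ = πmin⁻¹ * πmin⁻¹ * C := rfl
  have hEab : ∀ i, ∫ ω, aR i ω * bR i ω ∂μ = V := by
    intro i
    have hterm_int : ∀ k ∈ Finset.range (m+1), Integrable (fun ω =>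
        δ i ω * ind (Y i ω) ((k:ℝ)/(m:ℝ)) *
          ((1 - π (X i ω)) / (π (X i ω))^2 * SF (X i ω) * bern m k y)) μ := by
      intro k _
      refine aux_int (((hδm i).mul (ind_meas (hYm i) _)).mul
        (hSFXm i (fun x => (1 - π x) / (π x)^2 * SF x * bern m k y)))
        (K := 1 * (πmin⁻¹ * πmin⁻¹ * C * bern m k y)) ?_
      filter_upwards [hgbd i] with ω h1
      rw [abs_mul]
      have e1 : |δ i ω * ind (Y i ω) ((k:ℝ)/(m:ℝ))| ≤ 1 := by
        rw [abs_mul]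
        calc |δ i ω| * |ind (Y i ω) ((k:ℝ)/(m:ℝ))| ≤ 1 * 1 :=
            mul_le_mul (hδbd i ω) (hind1 _ _) (abs_nonneg _) zero_le_one
          _ = 1 := one_mul 1
      have e2 : |(1 - π (X i ω)) / (π (X i ω))^2 * SF (X i ω) * bern m k y|
          ≤ πmin⁻¹ * πmin⁻¹ * C * bern m k y := by
        rw [abs_mul, abs_of_nonneg (hbern0 k)]
        exact mul_le_mul_of_nonneg_right h1 (hbern0 k)
      exact mul_le_mul e1 e2 (abs_nonneg _) zero_le_one
    have hterm_int2 : ∀ k ∈ Finset.range (m+1), Integrable (fun ω =>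
        π (X i ω) * Fc (X i ω) ((k:ℝ)/(m:ℝ)) *
          ((1 - π (X i ω)) / (π (X i ω))^2 * SF (X i ω) * bern m k y)) μ := by
      intro k _
      refine aux_int (hSFXm i (fun x => π x * Fc x ((k:ℝ)/(m:ℝ)) *
        ((1 - π x) / (π x)^2 * SF x * bern m k y)))
        (K := 1 * (πmin⁻¹ * πmin⁻¹ * C * bern m k y)) ?_
      filter_upwards [hgbd i, hπ1 i, hFc01 i ((k:ℝ)/(m:ℝ))] with ω h1 h2 h3
      rw [abs_mul]
      have e1 : |π (X i ω) * Fc (X i ω) ((k:ℝ)/(m:ℝ))| ≤ 1 := by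
        rw [abs_mul]
        have ha : |π (X i ω)| ≤ 1 := abs_le.2 ⟨by linarith [hπpos (X i ω)], h2⟩
        have hb : |Fc (X i ω) ((k:ℝ)/(m:ℝ))| ≤ 1 := abs_le.2 ⟨by linarith [h3.1], h3.2⟩
        calc |π (X i ω)| * |Fc (X i ω) ((k:ℝ)/(m:ℝ))| ≤ 1 * 1 :=
            mul_le_mul ha hb (abs_nonneg _) zero_le_one
          _ = 1 := one_mul 1
      have e2 : |(1 - π (X i ω)) / (π (X i ω))^2 * SF (X i ω) * bern m k y|
          ≤ πmin⁻¹ * πmin⁻¹ * C * bern m k y := by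
        rw [abs_mul, abs_of_nonneg (hbern0 k)]
        exact mul_le_mul_of_nonneg_right h1 (hbern0 k)
      exact mul_le_mul e1 e2 (abs_nonneg _) zero_le_one
    have hptw : (fun ω => aR i ω * bR i ω) = fun ω => ∑ k ∈ Finset.range (m+1),
        δ i ω * ind (Y i ω) ((k:ℝ)/(m:ℝ)) *
          ((1 - π (X i ω)) / (π (X i ω))^2 * SF (X i ω) * bern m k y) := by
      funext ω
      simp only [haR, hbR]
      have e : ∀ k ∈ Finset.range (m+1),
          δ i ω * ind (Y i ω) ((k:ℝ)/(m:ℝ)) *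
            ((1 - π (X i ω)) / (π (X i ω))^2 * SF (X i ω) * bern m k y)
          = (ind (Y i ω) ((k:ℝ)/(m:ℝ)) * bern m k y) *
            (δ i ω * ((1 - π (X i ω)) / (π (X i ω))^2 * SF (X i ω))) := fun k _ => by ring
      rw [Finset.sum_congr rfl e, ← Finset.sum_mul]
      rcases hδ01 i ω with h0 | h0 <;> rw [h0] <;> ring
    rw [hptw, integral_finset_sum _ hterm_int]
    calc ∑ k ∈ Finset.range (m+1), ∫ ω, δ i ω * ind (Y i ω) ((k:ℝ)/(m:ℝ)) *
          ((1 - π (X i ω)) / (π (X i ω))^2 * SF (X i ω) * bern m k y) ∂μ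
        = ∑ k ∈ Finset.range (m+1), ∫ ω, π (X i ω) * Fc (X i ω) ((k:ℝ)/(m:ℝ)) *
          ((1 - π (X i ω)) / (π (X i ω))^2 * SF (X i ω) * bern m k y) ∂μ := by
          refine Finset.sum_congr rfl fun k _ => ?_
          exact aux_key2 (hXm i) (hYm i) (hδm i) (hδ01 i) π Fc (hprop i) (hMAR i)
            ((k:ℝ)/(m:ℝ)) (hFc i _) (fun x => (1 - π x) / (π x)^2 * SF x * bern m k y)
            (πmin⁻¹ * πmin⁻¹ * C * bern m k y)
            (by filter_upwards [hgbd i] with ω h1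
                rw [abs_mul, abs_of_nonneg (hbern0 k)]
                exact mul_le_mul_of_nonneg_right h1 (hbern0 k))
      _ = ∫ ω, ∑ k ∈ Finset.range (m+1), π (X i ω) * Fc (X i ω) ((k:ℝ)/(m:ℝ)) *
          ((1 - π (X i ω)) / (π (X i ω))^2 * SF (X i ω) * bern m k y) ∂μ :=
          (integral_finset_sum _ hterm_int2).symm
      _ = ∫ ω, G (X i ω) ∂μ := by
          refine integral_congr_ae (ae_of_all _ fun ω => ?_)
          dsimp only
          have e : ∀ k ∈ Finset.range (m+1),
              π (X i ω) * Fc (X i ω) ((k:ℝ)/(m:ℝ)) *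
                ((1 - π (X i ω)) / (π (X i ω))^2 * SF (X i ω) * bern m k y)
              = (Fc (X i ω) ((k:ℝ)/(m:ℝ)) * bern m k y) *
                (π (X i ω) * ((1 - π (X i ω)) / (π (X i ω))^2 * SF (X i ω))) := fun k _ => by ring
          rw [Finset.sum_congr rfl e, ← Finset.sum_mul]
          have eSF : ∑ k ∈ Finset.range (m+1), Fc (X i ω) ((k:ℝ)/(m:ℝ)) * bern m k y
              = SF (X i ω) := by simp only [hSF]
          rw [eSF]
          simp only [hG]
          have hne := hπne (X i ω)
          field_simp
      _ = V := by rw [hV]; exact hGid i G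
  have hEbb : ∀ i, ∫ ω, bR i ω * bR i ω ∂μ = V := by
    intro i
    have h3bd : ∀ᵐ ω ∂μ, |(1 - 2 * π (X i ω)) / (π (X i ω))^2 * SF (X i ω)^2|
        ≤ 3 * πmin⁻¹ * πmin⁻¹ * (C * C) := by
      filter_upwards [hπ1 i, hSFbd i] with ω h1 h2
      rw [abs_mul]
      have e1 : |(1 - 2 * π (X i ω)) / (π (X i ω))^2| ≤ 3 * (πmin⁻¹ * πmin⁻¹) := by
        rw [abs_div, abs_of_pos (pow_pos (hπpos _) 2)]
        have hnum : |1 - 2 * π (X i ω)| ≤ 3 := by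
          rw [abs_le]
          have := hπpos (X i ω)
          constructor <;> [linarith; linarith]
        calc |1 - 2 * π (X i ω)| / (π (X i ω))^2 ≤ 3 / πmin^2 :=
            div_le_div₀ (by norm_num) hnum (by positivity)
              (pow_le_pow_left₀ hπmin.le (hπ _) 2)
          _ = 3 * (πmin⁻¹ * πmin⁻¹) := by rw [div_eq_mul_inv, pow_two, mul_inv]
      have e2 : |SF (X i ω)^2| ≤ C * C := by
        rw [pow_two, abs_mul]
        exact mul_le_mul h2 h2 (abs_nonneg _) hC0
      calc |(1 - 2 * π (X i ω)) / (π (X i ω))^2| * |SF (X i ω)^2|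
          ≤ (3 * (πmin⁻¹ * πmin⁻¹)) * (C * C) :=
            mul_le_mul e1 e2 (abs_nonneg _) (by positivity)
        _ = 3 * πmin⁻¹ * πmin⁻¹ * (C * C) := by ring
    have hint1 : Integrable (fun ω =>
        δ i ω * ((1 - 2 * π (X i ω)) / (π (X i ω))^2 * SF (X i ω)^2)) μ := by
      refine aux_int ((hδm i).mul (hSFXm i (fun x => (1 - 2 * π x) / (π x)^2 * SF x^2)))
        (K := 1 * (3 * πmin⁻¹ * πmin⁻¹ * (C * C))) ?_
      filter_upwards [h3bd] with ω h1
      rw [abs_mul]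
      exact mul_le_mul (hδbd i ω) h1 (abs_nonneg _) zero_le_one
    have hint2 : Integrable (fun ω => SF (X i ω)^2) μ := by
      refine aux_int (hSFXm i (fun x => SF x^2)) (K := C * C) ?_
      filter_upwards [hSFbd i] with ω h2
      rw [pow_two, abs_mul]
      exact mul_le_mul h2 h2 (abs_nonneg _) hC0
    have hint3 : Integrable (fun ω =>
        π (X i ω) * ((1 - 2 * π (X i ω)) / (π (X i ω))^2 * SF (X i ω)^2)) μ := by
      refine aux_int (hSFXm i (fun x => π x * ((1 - 2 * π x) / (π x)^2 * SF x^2)))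
        (K := 1 * (3 * πmin⁻¹ * πmin⁻¹ * (C * C))) ?_
      filter_upwards [h3bd, hπ1 i] with ω h1 h2
      rw [abs_mul]
      have ha : |π (X i ω)| ≤ 1 := abs_le.2 ⟨by linarith [hπpos (X i ω)], h2⟩
      exact mul_le_mul ha h1 (abs_nonneg _) zero_le_one
    have hptw : (fun ω => bR i ω * bR i ω) = fun ω =>
        δ i ω * ((1 - 2 * π (X i ω)) / (π (X i ω))^2 * SF (X i ω)^2) + SF (X i ω)^2 := by
      funext ω
      simp only [hbR]
      rcases hδ01 i ω with h0 | h0 <;> rw [h0] <;>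
        (field_simp [hπne (X i ω)]; try ring)
    rw [hptw, integral_add hint1 hint2]
    have step1 : ∫ ω, δ i ω * ((1 - 2 * π (X i ω)) / (π (X i ω))^2 * SF (X i ω)^2) ∂μ
        = ∫ ω, π (X i ω) * ((1 - 2 * π (X i ω)) / (π (X i ω))^2 * SF (X i ω)^2) ∂μ :=
      aux_key1 (hXm i) (hδm i) (hδ01 i) π (hprop i)
        (fun x => (1 - 2 * π x) / (π x)^2 * SF x^2) (3 * πmin⁻¹ * πmin⁻¹ * (C * C)) h3bd
    rw [step1, ← integral_add hint3 hint2]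
    calc ∫ ω, π (X i ω) * ((1 - 2 * π (X i ω)) / (π (X i ω))^2 * SF (X i ω)^2)
          + SF (X i ω)^2 ∂μ
        = ∫ ω, G (X i ω) ∂μ := by
          refine integral_congr_ae (ae_of_all _ fun ω => ?_)
          dsimp only
          simp only [hG]
          field_simp [hπne (X i ω)]
          try ring
      _ = V := by rw [hV]; exact hGid i G
  -- independence of distinct indices
  have hψm : Measurable (fun p : ℝ × α × ℝ => (p.2.2 - π p.2.1) / π p.2.1 * SF p.2.1) := by
    have hπp : Measurable (fun p : ℝ × α × ℝ => π p.2.1) :=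
      (measurable_of_countable π).comp (measurable_fst.comp measurable_snd)
    exact (((measurable_snd.comp measurable_snd).sub hπp).div hπp).mul
      ((measurable_of_countable SF).comp (measurable_fst.comp measurable_snd))
  have hφm : Measurable (fun p : ℝ × α × ℝ => p.2.2 / π p.2.1 *
      ∑ k ∈ Finset.range (m+1), ind p.1 ((k:ℝ)/(m:ℝ)) * bern m k y) := by
    have hπp : Measurable (fun p : ℝ × α × ℝ => π p.2.1) :=
      (measurable_of_countable π).comp (measurable_fst.comp measurable_snd)
    refine ((measurable_snd.comp measurable_snd).div hπp).mul ?_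
    refine Finset.measurable_sum _ fun k _ => ?_
    refine Measurable.mul ?_ measurable_const
    unfold ind
    exact Measurable.ite (measurable_fst measurableSet_Iic) measurable_const measurable_const
  have hcross : ∀ i j, i ≠ j → ∫ ω, aR i ω * bR j ω ∂μ = 0 := by
    intro i j hij
    have hIF : IndepFun (aR i) (bR j) μ := by
      have h := (hindep.indepFun hij).comp hφm hψm
      exact h
    calc ∫ ω, aR i ω * bR j ω ∂μ = ∫ ω, (aR i * bR j) ω ∂μ := rfl
      _ = (∫ ω, aR i ω ∂μ) * ∫ ω, bR j ω ∂μ :=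
          hIF.integral_mul_eq_mul_integral (haRint i).aestronglyMeasurable (hbRint j).aestronglyMeasurable
      _ = 0 := by rw [hEb j, mul_zero]
  have hcross' : ∀ i j, i ≠ j → ∫ ω, bR i ω * bR j ω ∂μ = 0 := by
    intro i j hij
    have hIF : IndepFun (bR i) (bR j) μ := by
      have h := (hindep.indepFun hij).comp hψm hψm
      exact h
    calc ∫ ω, bR i ω * bR j ω ∂μ = ∫ ω, (bR i * bR j) ω ∂μ := rfl
      _ = (∫ ω, bR i ω ∂μ) * ∫ ω, bR j ω ∂μ :=
          hIF.integral_mul_eq_mul_integral (hbRint i).aestronglyMeasurable (hbRint j).aestronglyMeasurable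
      _ = 0 := by rw [hEb j, mul_zero]
  -- double sums
  have hdouble : ∀ (f : ℕ → Ω → ℝ), (∀ i j, Integrable (fun ω => f i ω * bR j ω) μ) →
      (∀ i, ∫ ω, f i ω * bR i ω ∂μ = V) → (∀ i j, i ≠ j → ∫ ω, f i ω * bR j ω ∂μ = 0) →
      ∫ ω, ((n:ℝ)⁻¹ * ∑ i ∈ Finset.range n, f i ω) *
        ((n:ℝ)⁻¹ * ∑ j ∈ Finset.range n, bR j ω) ∂μ = (n:ℝ)⁻¹ * V := by
    intro f hint hdiag hoff
    have e : ∀ ω, ((n:ℝ)⁻¹ * ∑ i ∈ Finset.range n, f i ω) *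
        ((n:ℝ)⁻¹ * ∑ j ∈ Finset.range n, bR j ω)
        = (n:ℝ)⁻¹ * (n:ℝ)⁻¹ *
            ∑ i ∈ Finset.range n, ∑ j ∈ Finset.range n, f i ω * bR j ω := by
      intro ω
      rw [show ((n:ℝ)⁻¹ * ∑ i ∈ Finset.range n, f i ω) *
            ((n:ℝ)⁻¹ * ∑ j ∈ Finset.range n, bR j ω)
          = (n:ℝ)⁻¹ * (n:ℝ)⁻¹ *
            ((∑ i ∈ Finset.range n, f i ω) * ∑ j ∈ Finset.range n, bR j ω) from by ring,
        Finset.sum_mul_sum]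
    simp_rw [e]
    rw [integral_const_mul,
      integral_finset_sum _ (fun i _ => integrable_finset_sum _ (fun j _ => hint i j))]
    have hrow : ∀ i ∈ Finset.range n, (∫ ω, ∑ j ∈ Finset.range n, f i ω * bR j ω ∂μ) = V := by
      intro i hi
      rw [integral_finset_sum _ (fun j _ => hint i j),
        Finset.sum_eq_single i (fun j _ hji => hoff i j (Ne.symm hji)) (fun h => absurd hi h)]
      exact hdiag i
    rw [Finset.sum_congr rfl hrow, Finset.sum_const, Finset.card_range, nsmul_eq_mul]
    field_simp
  have hsum_b0 : ∫ ω, (n:ℝ)⁻¹ * ∑ i ∈ Finset.range n, bR i ω ∂μ = 0 := by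
    rw [integral_const_mul, integral_finset_sum _ (fun i _ => hbRint i)]
    simp [hEb]
  have hsum_ab : ∫ ω, ((n:ℝ)⁻¹ * ∑ i ∈ Finset.range n, aR i ω) *
      ((n:ℝ)⁻¹ * ∑ j ∈ Finset.range n, bR j ω) ∂μ = (n:ℝ)⁻¹ * V :=
    hdouble aR habint hEab hcross
  have hsum_bb : ∫ ω, ((n:ℝ)⁻¹ * ∑ i ∈ Finset.range n, bR i ω) *
      ((n:ℝ)⁻¹ * ∑ j ∈ Finset.range n, bR j ω) ∂μ = (n:ℝ)⁻¹ * V :=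
    hdouble bR hbbint hEbb hcross'
  -- global integrability of the normalized sums
  have hAm : Measurable (fun ω => (n:ℝ)⁻¹ * ∑ i ∈ Finset.range n, aR i ω) :=
    measurable_const.mul (Finset.measurable_sum _ fun i _ => haRm i)
  have hBm : Measurable (fun ω => (n:ℝ)⁻¹ * ∑ i ∈ Finset.range n, bR i ω) :=
    measurable_const.mul (Finset.measurable_sum _ fun i _ => hbRm i)
  have hsumbd : ∀ (K : ℝ) (f : ℕ → Ω → ℝ) (ω : Ω), (∀ i, |f i ω| ≤ K) →
      |(n:ℝ)⁻¹ * ∑ i ∈ Finset.range n, f i ω| ≤ K := by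
    intro K f ω hbd
    rw [abs_mul, abs_inv, Nat.abs_cast]
    have habs : |∑ i ∈ Finset.range n, f i ω| ≤ (n:ℝ) * K := by
      calc |∑ i ∈ Finset.range n, f i ω| ≤ ∑ i ∈ Finset.range n, |f i ω| :=
          Finset.abs_sum_le_sum_abs _ _
        _ ≤ ∑ _i ∈ Finset.range n, K := Finset.sum_le_sum fun i _ => hbd i
        _ = (n:ℝ) * K := by rw [Finset.sum_const, Finset.card_range, nsmul_eq_mul]
    calc ((n:ℝ))⁻¹ * |∑ i ∈ Finset.range n, f i ω| ≤ (n:ℝ)⁻¹ * ((n:ℝ) * K) :=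
        mul_le_mul_of_nonneg_left habs (by positivity)
      _ = K := by field_simp
  have hAbd : ∀ᵐ ω ∂μ, |(n:ℝ)⁻¹ * ∑ i ∈ Finset.range n, aR i ω| ≤ πmin⁻¹ * C :=
    ae_of_all _ fun ω => hsumbd _ aR ω (fun i => haRbd i ω)
  have hBbd : ∀ᵐ ω ∂μ, |(n:ℝ)⁻¹ * ∑ i ∈ Finset.range n, bR i ω| ≤ πmin⁻¹ * 2 * C := by
    filter_upwards [ae_all_iff.2 hbRbd] with ω h
    exact hsumbd _ bR ω h
  have hAmem2 : MemLp (fun ω => (n:ℝ)⁻¹ * ∑ i ∈ Finset.range n, aR i ω) 2 μ :=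
    aux_mem2 hAm hAbd
  have hBmem2 : MemLp (fun ω => (n:ℝ)⁻¹ * ∑ i ∈ Finset.range n, bR i ω) 2 μ :=
    aux_mem2 hBm hBbd
  have hAint : Integrable (fun ω => (n:ℝ)⁻¹ * ∑ i ∈ Finset.range n, aR i ω) μ :=
    aux_int hAm hAbd
  have hBint : Integrable (fun ω => (n:ℝ)⁻¹ * ∑ i ∈ Finset.range n, bR i ω) μ :=
    aux_int hBm hBbd
  have hABint : Integrable (fun ω => ((n:ℝ)⁻¹ * ∑ i ∈ Finset.range n, aR i ω) *
      ((n:ℝ)⁻¹ * ∑ j ∈ Finset.range n, bR j ω)) μ := by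
    refine aux_int (hAm.mul hBm) (K := (πmin⁻¹ * C) * (πmin⁻¹ * 2 * C)) ?_
    filter_upwards [hAbd, hBbd] with ω h1 h2
    rw [abs_mul]
    exact mul_le_mul h1 h2 (abs_nonneg _) (by positivity)
  simp only [hA, hB]
  -- the three claims
  have claim1 : cov (fun ω => (n:ℝ)⁻¹ * ∑ i ∈ Finset.range n, aR i ω)
      (fun ω => (n:ℝ)⁻¹ * ∑ i ∈ Finset.range n, bR i ω) μ = (n:ℝ)⁻¹ * V := by
    rw [cov_expand _ _ hAint hBint hABint, hsum_ab, hsum_b0, mul_zero, sub_zero]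
  have claim2 : variance (fun ω => (n:ℝ)⁻¹ * ∑ i ∈ Finset.range n, bR i ω) μ
      = (n:ℝ)⁻¹ * V := by
    rw [variance_eq_sub hBmem2]
    have e1 : μ[(fun ω => (n:ℝ)⁻¹ * ∑ i ∈ Finset.range n, bR i ω) ^ 2]
        = ∫ ω, ((n:ℝ)⁻¹ * ∑ i ∈ Finset.range n, bR i ω) *
            ((n:ℝ)⁻¹ * ∑ j ∈ Finset.range n, bR j ω) ∂μ := by
      apply integral_congr_ae
      refine ae_of_all _ fun ω => ?_
      simp [pow_two]
    rw [e1, hsum_bb, hsum_b0]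
    ring
  have claim3 : variance (fun ω => ((n:ℝ)⁻¹ * ∑ i ∈ Finset.range n, aR i ω)
        - ((n:ℝ)⁻¹ * ∑ i ∈ Finset.range n, bR i ω)) μ
      = variance (fun ω => (n:ℝ)⁻¹ * ∑ i ∈ Finset.range n, aR i ω) μ - (n:ℝ)⁻¹ * V := by
    have hAAint : Integrable (fun ω => ((n:ℝ)⁻¹ * ∑ i ∈ Finset.range n, aR i ω) *
        ((n:ℝ)⁻¹ * ∑ i ∈ Finset.range n, aR i ω)) μ := by
      refine aux_int (hAm.mul hAm) (K := (πmin⁻¹ * C) * (πmin⁻¹ * C)) ?_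
      filter_upwards [hAbd] with ω h1
      rw [abs_mul]
      exact mul_le_mul h1 h1 (abs_nonneg _) (by positivity)
    have hBBint : Integrable (fun ω => ((n:ℝ)⁻¹ * ∑ i ∈ Finset.range n, bR i ω) *
        ((n:ℝ)⁻¹ * ∑ i ∈ Finset.range n, bR i ω)) μ := by
      refine aux_int (hBm.mul hBm) (K := (πmin⁻¹ * 2 * C) * (πmin⁻¹ * 2 * C)) ?_
      filter_upwards [hBbd] with ω h1
      rw [abs_mul]
      exact mul_le_mul h1 h1 (abs_nonneg _) (by positivity)
    have hABmem : MemLp (fun ω => ((n:ℝ)⁻¹ * ∑ i ∈ Finset.range n, aR i ω)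
        - ((n:ℝ)⁻¹ * ∑ i ∈ Finset.range n, bR i ω)) 2 μ := hAmem2.sub hBmem2
    rw [variance_eq_sub hABmem, variance_eq_sub hAmem2]
    have e1 : μ[(fun ω => ((n:ℝ)⁻¹ * ∑ i ∈ Finset.range n, aR i ω)
        - ((n:ℝ)⁻¹ * ∑ i ∈ Finset.range n, bR i ω)) ^ 2]
        = μ[(fun ω => (n:ℝ)⁻¹ * ∑ i ∈ Finset.range n, aR i ω) ^ 2] - (n:ℝ)⁻¹ * V := by
      have e : ∀ ω, (((n:ℝ)⁻¹ * ∑ i ∈ Finset.range n, aR i ω)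
            - ((n:ℝ)⁻¹ * ∑ i ∈ Finset.range n, bR i ω)) ^ 2
          = ((n:ℝ)⁻¹ * ∑ i ∈ Finset.range n, aR i ω) *
              ((n:ℝ)⁻¹ * ∑ i ∈ Finset.range n, aR i ω)
            - (2 * (((n:ℝ)⁻¹ * ∑ i ∈ Finset.range n, aR i ω) *
                ((n:ℝ)⁻¹ * ∑ j ∈ Finset.range n, bR j ω))
              - ((n:ℝ)⁻¹ * ∑ i ∈ Finset.range n, bR i ω) *
                ((n:ℝ)⁻¹ * ∑ j ∈ Finset.range n, bR j ω)) := by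
        intro ω
        ring
      have eL : μ[(fun ω => ((n:ℝ)⁻¹ * ∑ i ∈ Finset.range n, aR i ω)
          - ((n:ℝ)⁻¹ * ∑ i ∈ Finset.range n, bR i ω)) ^ 2]
          = ∫ ω, (((n:ℝ)⁻¹ * ∑ i ∈ Finset.range n, aR i ω)
            - ((n:ℝ)⁻¹ * ∑ i ∈ Finset.range n, bR i ω)) ^ 2 ∂μ := rfl
      have eR : μ[(fun ω => (n:ℝ)⁻¹ * ∑ i ∈ Finset.range n, aR i ω) ^ 2]
          = ∫ ω, ((n:ℝ)⁻¹ * ∑ i ∈ Finset.range n, aR i ω) *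
              ((n:ℝ)⁻¹ * ∑ i ∈ Finset.range n, aR i ω) ∂μ := by
        refine integral_congr_ae (ae_of_all _ fun ω => ?_)
        simp [pow_two]
      rw [eL, eR]
      simp_rw [e]
      have hsubint : Integrable (fun ω =>
          2 * (((n:ℝ)⁻¹ * ∑ i ∈ Finset.range n, aR i ω) *
              ((n:ℝ)⁻¹ * ∑ j ∈ Finset.range n, bR j ω))
          - ((n:ℝ)⁻¹ * ∑ i ∈ Finset.range n, bR i ω) *
              ((n:ℝ)⁻¹ * ∑ j ∈ Finset.range n, bR j ω)) μ := by
        exact (hABint.const_mul 2).sub hBBint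
      rw [integral_sub hAAint hsubint,
        integral_sub (hABint.const_mul 2) hBBint, integral_const_mul, hsum_ab, hsum_bb]
      ring
    have e2 : μ[fun ω => ((n:ℝ)⁻¹ * ∑ i ∈ Finset.range n, aR i ω)
        - ((n:ℝ)⁻¹ * ∑ i ∈ Finset.range n, bR i ω)]
        = μ[fun ω => (n:ℝ)⁻¹ * ∑ i ∈ Finset.range n, aR i ω] := by
      have : μ[fun ω => ((n:ℝ)⁻¹ * ∑ i ∈ Finset.range n, aR i ω)
          - ((n:ℝ)⁻¹ * ∑ i ∈ Finset.range n, bR i ω)]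
          = (∫ ω, (n:ℝ)⁻¹ * ∑ i ∈ Finset.range n, aR i ω ∂μ)
            - ∫ ω, (n:ℝ)⁻¹ * ∑ i ∈ Finset.range n, bR i ω ∂μ := integral_sub hAint hBint
      rw [this, hsum_b0, sub_zero]
    rw [e1, e2]
    ring
  exact ⟨claim1.trans claim2.symm, claim2, claim3⟩
end
end

section
/- Under the MAR setup, for every y ∈ [0,1] the following identity holds: σ²(y) − C(y) = E[ F_{Y₁|X₁}(y)(1 − F_{Y₁|X₁}(y))/π(X₁) ] + E[ F_{Y₁|X₁}(y)² ] − F(y)², where σ²(y) = E[F_{Y₁|X₁}(y)/π(X₁)] − F(y)² and C(y) = E[((1 − π(X₁))/π(X₁)) F_{Y₁|X₁}(y)²]. In particular, C(y) ≥ 0, so the asymptotic variance ν²(y) = σ²(y) − C(y) of the feasible estimator is no larger than the asymptotic variance σ²(y) of the pseudo estimator. -/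
open MeasureTheory ProbabilityTheory Filter Asymptotics

noncomputable section

/-- `σ²(y) = E[F_{Y₁|X₁}(y)/π(X₁)] − F(y)²`. -/
def sigma2 {Ω α : Type*} [MeasurableSpace Ω] (μ : Measure Ω) (X : ℕ → Ω → α)
    (π : α → ℝ) (Fc : α → ℝ → ℝ) (F : ℝ → ℝ) (y : ℝ) : ℝ :=
  (∫ ω, Fc (X 0 ω) y / π (X 0 ω) ∂μ) - F y ^ 2

/-- `V(y) = √(y(1−y)/π) ⬝ E[f_{Y₁|X₁}(y)/π(X₁)]` (here `π` in the square root is `Real.pi`). -/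
def Vfun {Ω α : Type*} [MeasurableSpace Ω] (μ : Measure Ω) (X : ℕ → Ω → α)
    (π : α → ℝ) (fc : α → ℝ → ℝ) (y : ℝ) : ℝ :=
  Real.sqrt (y * (1 - y) / Real.pi) * ∫ ω, fc (X 0 ω) y / π (X 0 ω) ∂μ

/-- `B(y) = ½ y(1−y) f'(y)`. -/
def Bfun (f' : ℝ → ℝ) (y : ℝ) : ℝ := 1 / 2 * y * (1 - y) * f' y

/-- `C(y) = E[((1−π(X₁))/π(X₁)) F_{Y₁|X₁}(y)²]`. -/
def Cfun {Ω α : Type*} [MeasurableSpace Ω] (μ : Measure Ω) (X : ℕ → Ω → α)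
    (π : α → ℝ) (Fc : α → ℝ → ℝ) (y : ℝ) : ℝ :=
  ∫ ω, (1 - π (X 0 ω)) / π (X 0 ω) * Fc (X 0 ω) y ^ 2 ∂μ

/-- Under the MAR setup, for every `y ∈ [0,1]`:
`σ²(y) − C(y) = E[F_{Y₁|X₁}(y)(1 − F_{Y₁|X₁}(y))/π(X₁)] + E[F_{Y₁|X₁}(y)²] − F(y)²`;
in particular `C(y) ≥ 0`, so `ν²(y) = σ²(y) − C(y) ≤ σ²(y)`. -/
theorem variance_reduction_identity
    {Ω : Type*} [MeasurableSpace Ω] [StandardBorelSpace Ω]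
    {α : Type*} [MeasurableSpace α] [MeasurableSingletonClass α] [Countable α]
    (μ : Measure Ω) [IsProbabilityMeasure μ]
    (Y : ℕ → Ω → ℝ) (X : ℕ → Ω → α) (δ : ℕ → Ω → ℝ)
    (hYm : ∀ i, Measurable (Y i)) (hXm : ∀ i, Measurable (X i)) (hδm : ∀ i, Measurable (δ i))
    (hY01 : ∀ i ω, Y i ω ∈ Set.Icc (0 : ℝ) 1)
    (hδ01 : ∀ i ω, δ i ω = 0 ∨ δ i ω = 1)
    -- the triples (Y_i, X_i, δ_i) are i.i.d.
    (hiid : ∀ i j, IdentDistrib (fun ω => (Y i ω, X i ω, δ i ω))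
      (fun ω => (Y j ω, X j ω, δ j ω)) μ μ)
    (hindep : iIndepFun (fun i ω => (Y i ω, X i ω, δ i ω)) μ)
    -- Assumption (A1): the propensity score is bounded below by πmin > 0
    (π : α → ℝ) (πmin : ℝ) (hπmin : 0 < πmin) (hπ : ∀ x, πmin ≤ π x)
    -- π(X_i) = P(δ_i = 1 | X_i)
    (hprop : ∀ i, μ[δ i | MeasurableSpace.comap (X i) inferInstance]
      =ᵐ[μ] fun ω => π (X i ω))
    -- MAR: δ_i is independent of Y_i conditionally on X_i
    (hMAR : ∀ i, CondIndepFun (MeasurableSpace.comap (X i) inferInstance)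
      ((hXm i).comap_le) (δ i) (Y i) μ)
    -- F is the CDF of the Y_i
    (F : ℝ → ℝ) (hF : ∀ t, F t = (μ {ω | Y 0 ω ≤ t}).toReal)
    -- F_{Y₁|X₁}: the conditional CDF of Y_i given X_i
    (Fc : α → ℝ → ℝ)
    (hFc : ∀ i t, μ[fun ω => ind (Y i ω) t | MeasurableSpace.comap (X i) inferInstance]
      =ᵐ[μ] fun ω => Fc (X i ω) t)
    (y : ℝ) (hy : y ∈ Set.Icc (0 : ℝ) 1) :
    sigma2 μ X π Fc F y - Cfun μ X π Fc y
        = (∫ ω, Fc (X 0 ω) y * (1 - Fc (X 0 ω) y) / π (X 0 ω) ∂μ)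
          + (∫ ω, Fc (X 0 ω) y ^ 2 ∂μ) - F y ^ 2 ∧
    0 ≤ Cfun μ X π Fc y ∧
    sigma2 μ X π Fc F y - Cfun μ X π Fc y ≤ sigma2 μ X π Fc F y := by
  classical
  have hm : MeasurableSpace.comap (X 0) inferInstance ≤ (inferInstance : MeasurableSpace Ω) :=
    (hXm 0).comap_le
  set g : Ω → ℝ := fun ω => Fc (X 0 ω) y with hg
  set p : Ω → ℝ := fun ω => π (X 0 ω) with hp
  have hgm : Measurable g := (measurable_of_countable (fun x => Fc x y)).comp (hXm 0)
  have hpm : Measurable p := (measurable_of_countable π).comp (hXm 0)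
  have hppos : ∀ ω, 0 < p ω := fun ω => lt_of_lt_of_le hπmin (hπ _)
  -- ind is measurable, bounded, integrable
  have hind_m : Measurable (fun ω => ind (Y 0 ω) y) := by
    unfold ind
    exact Measurable.ite (measurableSet_le (hYm 0) measurable_const)
      measurable_const measurable_const
  have hind_bd : ∀ ω, ind (Y 0 ω) y ∈ Set.Icc (0:ℝ) 1 := by
    intro ω; unfold ind; split <;> simp
  have hind_int : Integrable (fun ω => ind (Y 0 ω) y) μ := by
    apply Integrable.mono' (integrable_const (1:ℝ)) hind_m.aestronglyMeasurable
    filter_upwards with ω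
    have h := hind_bd ω
    rw [Real.norm_eq_abs, abs_le]
    exact ⟨by linarith [h.1], h.2⟩
  have hconst1 : (μ[(fun _ => (1:ℝ)) | MeasurableSpace.comap (X 0) inferInstance]) = fun _ => (1:ℝ) := condExp_const (μ := μ) hm (1:ℝ)
  -- g ∈ [0,1] a.e.
  have hg01 : ∀ᵐ ω ∂μ, 0 ≤ g ω ∧ g ω ≤ 1 := by
    have h0 : 0 ≤ᵐ[μ] μ[fun ω => ind (Y 0 ω) y | MeasurableSpace.comap (X 0) inferInstance] :=
      condExp_nonneg (Filter.Eventually.of_forall fun ω => (hind_bd ω).1)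
    have h1 : μ[fun ω => ind (Y 0 ω) y | MeasurableSpace.comap (X 0) inferInstance] ≤ᵐ[μ] μ[(fun _ => (1:ℝ)) | MeasurableSpace.comap (X 0) inferInstance] :=
      condExp_mono hind_int (integrable_const 1)
        (Filter.Eventually.of_forall fun ω => (hind_bd ω).2)
    filter_upwards [h0, h1, hFc 0 y] with ω h0 h1 he
    rw [hconst1] at h1
    constructor
    · show (0:ℝ) ≤ Fc (X 0 ω) y
      rw [← he]; exact h0
    · show Fc (X 0 ω) y ≤ 1
      rw [← he]; exact h1
  -- δ is bounded, integrable
  have hδbd : ∀ ω, 0 ≤ δ 0 ω ∧ δ 0 ω ≤ 1 := by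
    intro ω; rcases hδ01 0 ω with h | h <;> rw [h] <;> norm_num
  have hδ_int : Integrable (δ 0) μ := by
    apply Integrable.mono' (integrable_const (1:ℝ)) (hδm 0).aestronglyMeasurable
    filter_upwards with ω
    have h := hδbd ω
    rw [Real.norm_eq_abs, abs_le]
    exact ⟨by linarith [h.1], h.2⟩
  -- p ≤ 1 a.e.
  have hp1 : ∀ᵐ ω ∂μ, p ω ≤ 1 := by
    have h1 : μ[δ 0 | MeasurableSpace.comap (X 0) inferInstance] ≤ᵐ[μ] μ[(fun _ => (1:ℝ)) | MeasurableSpace.comap (X 0) inferInstance] :=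
      condExp_mono hδ_int (integrable_const 1)
        (Filter.Eventually.of_forall fun ω => (hδbd ω).2)
    filter_upwards [h1, hprop 0] with ω h1 he
    rw [hconst1] at h1
    show π (X 0 ω) ≤ 1
    rw [← he]; exact h1
  -- Integrability of the four integrands
  have hbd_int : ∀ (f : Ω → ℝ), Measurable f → (∀ᵐ ω ∂μ, |f ω| ≤ πmin⁻¹) →
      Integrable f μ := by
    intro f hf hbd
    apply Integrable.mono' (integrable_const (πmin⁻¹ : ℝ)) hf.aestronglyMeasurable
    filter_upwards [hbd] with ω h
    rwa [Real.norm_eq_abs]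
  have habs : ∀ᵐ ω ∂μ, |g ω| ≤ 1 ∧ |1 - p ω| ≤ 1 ∧ p ω ≥ πmin := by
    filter_upwards [hg01, hp1] with ω h1 h2
    refine ⟨abs_le.mpr ⟨by linarith [h1.1], h1.2⟩,
      abs_le.mpr ⟨by linarith, by linarith [hppos ω, hπ (X 0 ω)]⟩, hπ _⟩
  have int1 : Integrable (fun ω => g ω / p ω) μ := by
    apply hbd_int _ (hgm.div hpm)
    filter_upwards [habs] with ω h
    obtain ⟨h1, h2, h3⟩ := h
    show |g ω / p ω| ≤ πmin⁻¹
    rw [abs_div, abs_of_pos (hppos ω)]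
    calc |g ω| / p ω ≤ 1 / πmin := div_le_div₀ zero_le_one h1 hπmin h3
      _ = πmin⁻¹ := one_div _
  have int2 : Integrable (fun ω => (1 - p ω) / p ω * g ω ^ 2) μ := by
    apply hbd_int _ (((measurable_const.sub hpm).div hpm).mul (hgm.pow_const 2))
    filter_upwards [habs] with ω h
    obtain ⟨h1, h2, h3⟩ := h
    show |(1 - p ω) / p ω * g ω ^ 2| ≤ πmin⁻¹
    rw [abs_mul, abs_div, abs_of_pos (hppos ω), abs_pow]
    calc |1 - p ω| / p ω * |g ω| ^ 2
        ≤ 1 / πmin * 1 := by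
          apply mul_le_mul (div_le_div₀ zero_le_one h2 hπmin h3)
          · calc |g ω| ^ 2 ≤ 1 ^ 2 := pow_le_pow_left₀ (abs_nonneg _) h1 2
              _ = 1 := one_pow 2
          · positivity
          · positivity
      _ = πmin⁻¹ := by rw [mul_one, one_div]
  have int3 : Integrable (fun ω => g ω * (1 - g ω) / p ω) μ := by
    apply hbd_int _ ((hgm.mul (measurable_const.sub hgm)).div hpm)
    filter_upwards [hg01, habs] with ω hg ha
    obtain ⟨h1, h2, h3⟩ := ha
    show |g ω * (1 - g ω) / p ω| ≤ πmin⁻¹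
    rw [abs_div, abs_of_pos (hppos ω)]
    have hnum : |g ω * (1 - g ω)| ≤ 1 := by
      rw [abs_mul]
      calc |g ω| * |1 - g ω| ≤ 1 * 1 := by
            apply mul_le_mul h1 _ (abs_nonneg _) zero_le_one
            rw [abs_le]; constructor <;> [linarith [hg.2]; linarith [hg.1]]
        _ = 1 := one_mul 1
    calc |g ω * (1 - g ω)| / p ω ≤ 1 / πmin := div_le_div₀ zero_le_one hnum hπmin h3
      _ = πmin⁻¹ := one_div _
  have int4 : Integrable (fun ω => g ω ^ 2) μ := by
    apply Integrable.mono' (integrable_const (1:ℝ)) (hgm.pow_const 2).aestronglyMeasurable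
    filter_upwards [hg01] with ω h
    rw [Real.norm_eq_abs, abs_pow]
    calc |g ω| ^ 2 ≤ 1 ^ 2 := by
          apply pow_le_pow_left₀ (abs_nonneg _) _ 2
          rw [abs_le]; exact ⟨by linarith [h.1], h.2⟩
      _ = 1 := one_pow 2
  -- pointwise identity
  have heq : (fun ω => g ω / p ω - (1 - p ω) / p ω * g ω ^ 2)
      =ᵐ[μ] fun ω => g ω * (1 - g ω) / p ω + g ω ^ 2 := by
    filter_upwards with ω
    have hp0 : p ω ≠ 0 := (hppos ω).ne'
    field_simp
    ring
  have hkey : (∫ ω, g ω / p ω ∂μ) - (∫ ω, (1 - p ω) / p ω * g ω ^ 2 ∂μ)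
      = (∫ ω, g ω * (1 - g ω) / p ω ∂μ) + ∫ ω, g ω ^ 2 ∂μ := by
    rw [← integral_sub int1 int2, integral_congr_ae heq, integral_add int3 int4]
  have hC : 0 ≤ Cfun μ X π Fc y := by
    apply integral_nonneg_of_ae
    filter_upwards [hg01, hp1] with ω h1 h2
    have := hppos ω
    have : 0 ≤ (1 - p ω) / p ω := div_nonneg (by linarith) (hppos ω).le
    positivity
  refine ⟨?_, hC, by linarith⟩
  show (∫ ω, g ω / p ω ∂μ) - F y ^ 2 - (∫ ω, (1 - p ω) / p ω * g ω ^ 2 ∂μ)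
      = (∫ ω, g ω * (1 - g ω) / p ω ∂μ) + (∫ ω, g ω ^ 2 ∂μ) - F y ^ 2
  linarith [hkey]
end
end
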